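/- arXiv:2105.12779 — 2 statements merged into one kernel-verified Lean document; each statement's English description precedes it below -/
import Mathlib

section
/- Sobolev-type connection formula: the monic orthogonal polynomials S_n(x;q) with respect to the Sobolev-type inner product ⟨f,g⟩_λ = ⟨f,g⟩ + λ (D_q f)(α)(D_q g)(α) satisfy S_n(x;q) = H_n(x;q) - λ · ([n]_q H_{n-1}(α;q) / (1 + λ K_{n-1,q}^{(1,1)}(α,α))) · K_{n-1,q}^{(0,1)}(x,α), where K_{n-1,q}^{(i,j)}(x,y) = ∑_{k=0}^{n-1} D_q^i H_k(x;q) D_q^j H_k(y;q)/h_k. -/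
open Polynomial
open Filter

section QHermAux

private noncomputable def qhaL (q : ℝ) (w : ℝ → ℝ) (p : Polynomial ℝ) : ℝ :=
  (1 - q) * ∑' k : ℕ, q ^ k *
    (p.eval (q ^ k) * w (q ^ k) + p.eval (-(q ^ k)) * w (-(q ^ k)))

variable {q : ℝ}

private lemma qha_log_abs_le (hq0 : 0 < q) (hq1 : q < 1) {t : ℝ} (ht : |t| ≤ q) :
    |Real.log (1 + t)| ≤ |t| / (1 - q) := by
  have h1q : 0 < 1 - q := by linarith
  have htl : -q ≤ t := neg_le_of_abs_le ht
  have htu : t ≤ q := le_of_abs_le ht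
  have h1t : 0 < 1 + t := by linarith
  rcases le_or_gt 0 (Real.log (1 + t)) with hl | hl
  · rw [abs_of_nonneg hl]
    have := Real.log_le_sub_one_of_pos h1t
    have h2 : t ≤ |t| := le_abs_self t
    have h3 : |t| ≤ |t| / (1 - q) := by
      rw [le_div_iff₀ h1q]
      nlinarith [abs_nonneg t]
    linarith
  · rw [abs_of_neg hl]
    have hinv : 0 < (1 + t)⁻¹ := by positivity
    have hlog := Real.log_le_sub_one_of_pos hinv
    rw [Real.log_inv] at hlog
    have h2 : -Real.log (1 + t) ≤ -t / (1 + t) := by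
      have h4 : (1 + t)⁻¹ - 1 = -t / (1 + t) := by field_simp; ring
      linarith [h4 ▸ hlog]
    have h3 : -t / (1 + t) ≤ |t| / (1 - q) :=
      div_le_div₀ (abs_nonneg t) (neg_le_abs t) h1q (by linarith)
    linarith

private lemma qha_log_bound (hq0 : 0 < q) (hq1 : q < 1) {y : ℝ} (hy : |y| ≤ 1) (j : ℕ) :
    |Real.log (1 + y * q ^ (j + 1))| ≤ (q / (1 - q)) * q ^ j := by
  have h1q : 0 < 1 - q := by linarith
  have hqj : |y * q ^ (j + 1)| ≤ q ^ (j + 1) := by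
    rw [abs_mul, abs_pow, abs_of_pos hq0]
    calc |y| * q ^ (j+1) ≤ 1 * q ^ (j+1) := by gcongr
      _ = q ^ (j+1) := one_mul _
  have hqq : q ^ (j + 1) ≤ q := by
    calc q ^ (j+1) ≤ q ^ 1 := pow_le_pow_of_le_one hq0.le hq1.le (by omega)
      _ = q := pow_one q
  calc |Real.log (1 + y * q ^ (j+1))| ≤ |y * q ^ (j+1)| / (1 - q) :=
        qha_log_abs_le hq0 hq1 (le_trans hqj hqq)
    _ ≤ q ^ (j+1) / (1 - q) := by gcongr
    _ = (q / (1-q)) * q ^ j := by rw [pow_succ]; ring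

private lemma qha_summable_log (hq0 : 0 < q) (hq1 : q < 1) {y : ℝ} (hy : |y| ≤ 1) :
    Summable fun j : ℕ => Real.log (1 + y * q ^ (j + 1)) := by
  apply Summable.of_abs
  exact Summable.of_nonneg_of_le (fun j => abs_nonneg _) (qha_log_bound hq0 hq1 hy)
    ((summable_geometric_of_lt_one hq0.le hq1).mul_left _)

private lemma qha_fac_pos (hq0 : 0 < q) (hq1 : q < 1) {y : ℝ} (hy : |y| ≤ 1) (j : ℕ) :
    0 < 1 + y * q ^ (j + 1) := by
  have h1 : |y * q ^ (j + 1)| < 1 := by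
    rw [abs_mul, abs_pow, abs_of_pos hq0]
    calc |y| * q ^ (j+1) ≤ 1 * q ^ (j+1) := by gcongr
      _ = q ^ (j+1) := one_mul _
      _ ≤ q ^ 1 := pow_le_pow_of_le_one hq0.le hq1.le (by omega)
      _ < 1 := by rw [pow_one]; exact hq1
  have := neg_le_of_abs_le h1.le
  nlinarith [neg_lt_of_abs_lt h1]

private lemma qha_hasProd (hq0 : 0 < q) (hq1 : q < 1) {y : ℝ} (hy : |y| ≤ 1) :
    HasProd (fun j : ℕ => 1 + y * q ^ (j + 1))
      (Real.exp (∑' j : ℕ, Real.log (1 + y * q ^ (j + 1)))) := by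
  have h := (qha_summable_log hq0 hq1 hy).hasSum.rexp
  have he : (Real.exp ∘ fun j : ℕ => Real.log (1 + y * q ^ (j + 1)))
      = fun j : ℕ => 1 + y * q ^ (j + 1) := by
    funext j
    exact Real.exp_log (qha_fac_pos hq0 hq1 hy j)
  rwa [he] at h

private lemma qha_tprod_pos (hq0 : 0 < q) (hq1 : q < 1) {y : ℝ} (hy : |y| ≤ 1) :
    0 < ∏' j : ℕ, (1 + y * q ^ (j + 1)) := by
  rw [(qha_hasProd hq0 hq1 hy).tprod_eq]
  exact Real.exp_pos _

private lemma qha_tprod_le (hq0 : 0 < q) (hq1 : q < 1) {y : ℝ} (hy : |y| ≤ 1) :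
    ∏' j : ℕ, (1 + y * q ^ (j + 1)) ≤ Real.exp (q / ((1 - q) * (1 - q))) := by
  rw [(qha_hasProd hq0 hq1 hy).tprod_eq, Real.exp_le_exp]
  have h1q : 0 < 1 - q := by linarith
  have hb : ∀ j : ℕ, Real.log (1 + y * q ^ (j + 1)) ≤ (q / (1 - q)) * q ^ j :=
    fun j => le_trans (le_abs_self _) (qha_log_bound hq0 hq1 hy j)
  calc ∑' j : ℕ, Real.log (1 + y * q ^ (j + 1))
      ≤ ∑' j : ℕ, (q / (1 - q)) * q ^ j := by
        apply Summable.tsum_le_tsum hb (qha_summable_log hq0 hq1 hy)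
          ((summable_geometric_of_lt_one hq0.le hq1).mul_left _)
    _ = (q / (1 - q)) * (1 - q)⁻¹ := by
        rw [tsum_mul_left, tsum_geometric_of_lt_one hq0.le hq1]
    _ = q / ((1 - q) * (1 - q)) := by field_simp

private lemma qha_w_pos_le (hq0 : 0 < q) (hq1 : q < 1) (w : ℝ → ℝ)
    (hw : ∀ x : ℝ, w x = (∏' j : ℕ, (1 - x * q ^ (j + 1))) * (∏' j : ℕ, (1 + x * q ^ (j + 1))))
    {x : ℝ} (hx : |x| ≤ 1) :
    0 < w x ∧ w x ≤ Real.exp (q / ((1 - q) * (1 - q))) * Real.exp (q / ((1 - q) * (1 - q))) := by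
  have hnx : |(-x)| ≤ 1 := by rwa [abs_neg]
  have h1 : (∏' j : ℕ, (1 - x * q ^ (j + 1))) = ∏' j : ℕ, (1 + (-x) * q ^ (j + 1)) :=
    tprod_congr fun j => by ring
  rw [hw x, h1]
  constructor
  · exact mul_pos (qha_tprod_pos hq0 hq1 hnx) (qha_tprod_pos hq0 hq1 hx)
  · exact mul_le_mul (qha_tprod_le hq0 hq1 hnx) (qha_tprod_le hq0 hq1 hx)
      (qha_tprod_pos hq0 hq1 hx).le (Real.exp_pos _).le

private lemma qha_w_even (w : ℝ → ℝ)
    (hw : ∀ x : ℝ, w x = (∏' j : ℕ, (1 - x * q ^ (j + 1))) * (∏' j : ℕ, (1 + x * q ^ (j + 1))))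
    (x : ℝ) : w (-x) = w x := by
  rw [hw x, hw (-x)]
  have h1 : (∏' j : ℕ, (1 - (-x) * q ^ (j + 1))) = ∏' j : ℕ, (1 + x * q ^ (j + 1)) :=
    tprod_congr fun j => by ring
  have h2 : (∏' j : ℕ, (1 + (-x) * q ^ (j + 1))) = ∏' j : ℕ, (1 - x * q ^ (j + 1)) :=
    tprod_congr fun j => by ring
  rw [h1, h2, mul_comm]

private lemma qha_shift (hq0 : 0 < q) (hq1 : q < 1) {y : ℝ} (hy : |y| ≤ 1) :
    (∏' j : ℕ, (1 + y * q ^ (j + 1)))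
      = (1 + y * q) * ∏' j : ℕ, (1 + (q * y) * q ^ (j + 1)) := by
  have hqy : |q * y| ≤ 1 := by
    rw [abs_mul, abs_of_pos hq0]
    nlinarith [abs_nonneg y]
  have hm : Multipliable (fun j : ℕ => (1 + y * q ^ ((j + 1) + 1))) := by
    have := (qha_hasProd hq0 hq1 hqy).multipliable
    apply Multipliable.congr this
    intro j; ring
  have := tprod_eq_zero_mul' (f := fun j : ℕ => 1 + y * q ^ (j + 1)) hm
  rw [this]
  beta_reduce
  have h0 : (1 : ℝ) + y * q ^ (0 + 1) = 1 + y * q := by norm_num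
  rw [h0]
  congr 1
  exact tprod_congr fun j => by ring

private lemma qha_w_func (hq0 : 0 < q) (hq1 : q < 1) (w : ℝ → ℝ)
    (hw : ∀ x : ℝ, w x = (∏' j : ℕ, (1 - x * q ^ (j + 1))) * (∏' j : ℕ, (1 + x * q ^ (j + 1))))
    {x : ℝ} (hx : |x| ≤ 1) : w x = (1 - (q * x) * (q * x)) * w (q * x) := by
  have hnx : |(-x)| ≤ 1 := by rwa [abs_neg]
  have e1 : (∏' j : ℕ, (1 - x * q ^ (j + 1))) = ∏' j : ℕ, (1 + (-x) * q ^ (j + 1)) :=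
    tprod_congr fun j => by ring
  have e2 : (∏' j : ℕ, (1 + (q * (-x)) * q ^ (j + 1))) = ∏' j : ℕ, (1 - (q * x) * q ^ (j + 1)) :=
    tprod_congr fun j => by ring
  rw [hw x, hw (q * x), e1, qha_shift hq0 hq1 hnx, qha_shift hq0 hq1 hx, e2]
  ring

private lemma qha_poly_bound (p : Polynomial ℝ) :
    ∃ M : ℝ, 0 ≤ M ∧ ∀ x : ℝ, |x| ≤ 1 → |p.eval x| ≤ M := by
  refine ⟨∑ i ∈ Finset.range (p.natDegree + 1), |p.coeff i|,
    Finset.sum_nonneg fun i _ => abs_nonneg _, fun x hx => ?_⟩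
  rw [p.eval_eq_sum_range (x := x)]
  calc |∑ i ∈ Finset.range (p.natDegree + 1), p.coeff i * x ^ i|
      ≤ ∑ i ∈ Finset.range (p.natDegree + 1), |p.coeff i * x ^ i| :=
        Finset.abs_sum_le_sum_abs _ _
    _ ≤ ∑ i ∈ Finset.range (p.natDegree + 1), |p.coeff i| := by
        apply Finset.sum_le_sum
        intro i _
        rw [abs_mul, abs_pow]
        calc |p.coeff i| * |x| ^ i ≤ |p.coeff i| * 1 ^ i := by gcongr
          _ = |p.coeff i| := by rw [one_pow, mul_one]

private lemma qha_summable_master (hq0 : 0 < q) (hq1 : q < 1) (f : ℕ → ℝ) (M : ℝ)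
    (hM : ∀ k : ℕ, |f k| ≤ M * q ^ k) : Summable f := by
  apply Summable.of_abs
  exact Summable.of_nonneg_of_le (fun k => abs_nonneg _) hM
    ((summable_geometric_of_lt_one hq0.le hq1).mul_left _)

private lemma qha_telescope (g : ℕ → ℝ) (hs : Summable fun k => g k - g (k + 1))
    (h0 : Tendsto g atTop (nhds 0)) : ∑' k : ℕ, (g k - g (k + 1)) = g 0 := by
  have h1 := hs.hasSum.tendsto_sum_nat
  have h2 : (fun n => ∑ i ∈ Finset.range n, (g i - g (i + 1))) = fun n => g 0 - g n := by
    funext n; exact Finset.sum_range_sub' g n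
  rw [h2] at h1
  have h3 : Tendsto (fun n => g 0 - g n) atTop (nhds (g 0 - 0)) :=
    tendsto_const_nhds.sub h0
  rw [sub_zero] at h3
  exact tendsto_nhds_unique h1 h3

private lemma qha_dq_cancel (hq1 : q < 1) {u v : Polynomial ℝ}
    (h : C (q - 1) * X * u = C (q - 1) * X * v) : u = v := by
  have hq : q - 1 ≠ 0 := by intro h'; linarith
  exact mul_left_cancel₀ (mul_ne_zero (C_ne_zero.mpr hq) X_ne_zero) h

section DqSec
variable (Dq : Polynomial ℝ → Polynomial ℝ)
    (hDq : ∀ p : Polynomial ℝ, C (q - 1) * X * Dq p = p.comp (C q * X) - p)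
include hDq


private lemma qha_dq_add (hq1 : q < 1) (p r : Polynomial ℝ) : Dq (p + r) = Dq p + Dq r := by
  apply qha_dq_cancel hq1
  rw [hDq, add_comp, mul_add, hDq, hDq]
  ring

private lemma qha_dq_Cmul (hq1 : q < 1) (c : ℝ) (p : Polynomial ℝ) :
    Dq (C c * p) = C c * Dq p := by
  apply qha_dq_cancel hq1
  rw [hDq]
  calc (C c * p).comp (C q * X) - C c * p
      = C c * (p.comp (C q * X) - p) := by rw [mul_comp, C_comp]; ring
    _ = C c * (C (q - 1) * X * Dq p) := by rw [hDq]
    _ = C (q - 1) * X * (C c * Dq p) := by ring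

private lemma qha_dq_X (hq1 : q < 1) : Dq X = 1 := by
  apply qha_dq_cancel hq1
  rw [hDq, X_comp, mul_one, C_sub, C_1]
  ring

private lemma qha_dq_C (hq1 : q < 1) (c : ℝ) : Dq (C c) = 0 := by
  apply qha_dq_cancel hq1
  rw [hDq, C_comp]
  simp

private lemma qha_dq_one (hq1 : q < 1) : Dq 1 = 0 := by
  have := qha_dq_C Dq hDq hq1 1
  rwa [map_one] at this

private lemma qha_dq_sub (hq1 : q < 1) (p r : Polynomial ℝ) : Dq (p - r) = Dq p - Dq r := by
  apply qha_dq_cancel hq1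
  rw [hDq, sub_comp, mul_sub, hDq, hDq]
  ring

private lemma qha_dq_mul (hq1 : q < 1) (u v : Polynomial ℝ) :
    Dq (u * v) = u * Dq v + v.comp (C q * X) * Dq u := by
  apply qha_dq_cancel hq1
  rw [hDq, mul_comp]
  calc u.comp (C q * X) * v.comp (C q * X) - u * v
      = u * (v.comp (C q * X) - v) + v.comp (C q * X) * (u.comp (C q * X) - u) := by ring
    _ = u * (C (q-1) * X * Dq v) + v.comp (C q * X) * (C (q-1) * X * Dq u) := by
        rw [hDq, hDq]
    _ = C (q - 1) * X * (u * Dq v + v.comp (C q * X) * Dq u) := by ring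

private lemma qha_dq_pow (hq1 : q < 1) (m : ℕ) :
    Dq (X ^ (m + 1)) = C ((1 - q ^ (m + 1)) / (1 - q)) * X ^ m := by
  apply qha_dq_cancel hq1
  rw [hDq]
  have hqne : (1 : ℝ) - q ≠ 0 := by intro h; linarith
  have hc : (q - 1) * ((1 - q ^ (m + 1)) / (1 - q)) = q ^ (m + 1) - 1 := by
    field_simp; ring
  calc (X ^ (m + 1)).comp (C q * X) - X ^ (m + 1)
      = C (q ^ (m + 1) - 1) * X ^ (m + 1) := by
        rw [pow_comp, X_comp, mul_pow, ← C_pow, C_sub, C_1]; ring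
    _ = C ((q - 1) * ((1 - q ^ (m + 1)) / (1 - q))) * X ^ (m + 1) := by rw [hc]
    _ = C (q - 1) * X * (C ((1 - q ^ (m + 1)) / (1 - q)) * X ^ m) := by
        rw [C_mul, pow_succ]; ring

private lemma qha_dq_eval (p : Polynomial ℝ) (x : ℝ) :
    (q - 1) * x * (Dq p).eval x = p.eval (q * x) - p.eval x := by
  have := congrArg (eval x) (hDq p)
  simpa [eval_mul, eval_comp] using this


end DqSec

section HSec
variable (H : ℕ → Polynomial ℝ) (hH0 : H 0 = 1) (hH1 : H 1 = X)
    (hHrec : ∀ n : ℕ, H (n + 2) = X * H (n + 1) - C (q ^ (n + 1 - 1) * (1 - q ^ (n + 1))) * H n)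
include hH0 hH1 hHrec
private lemma qha_H_lowdeg {n : ℕ} (hm1 : (H (n+1)).Monic) (hd1 : (H (n+1)).natDegree = n + 1)
    (hm0 : (H n).Monic) (hd0 : (H n).natDegree = n) (c : ℝ) :
    (C c * H n).degree < (X * H (n+1)).degree := by
  have hmul : (X * H (n+1)).Monic := monic_X.mul hm1
  have hdmul : (X * H (n+1)).natDegree = n + 2 := by
    rw [monic_X.natDegree_mul hm1, hd1, natDegree_X]; omega
  have h2 : (X * H (n+1)).degree = ((n + 2 : ℕ) : WithBot ℕ) := by
    rw [degree_eq_natDegree hmul.ne_zero, hdmul]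
  have h3 : (C c * H n).degree ≤ ((n : ℕ) : WithBot ℕ) := by
    calc (C c * H n).degree ≤ (C c).degree + (H n).degree := degree_mul_le _ _
      _ ≤ 0 + ((n : ℕ) : WithBot ℕ) := by
          apply add_le_add degree_C_le
          rw [degree_eq_natDegree hm0.ne_zero, hd0]
      _ = ((n : ℕ) : WithBot ℕ) := zero_add _
  rw [h2]
  apply lt_of_le_of_lt h3
  exact Nat.cast_lt.mpr (by omega)

private lemma qha_H_monic : ∀ n : ℕ, (H n).Monic ∧ (H n).natDegree = n := by
  have key : ∀ n : ℕ, ((H n).Monic ∧ (H n).natDegree = n) ∧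
      ((H (n+1)).Monic ∧ (H (n+1)).natDegree = n + 1) := by
    intro n
    induction n with
    | zero => exact ⟨⟨by rw [hH0]; exact monic_one, by rw [hH0]; exact natDegree_one⟩,
        ⟨by rw [hH1]; exact monic_X, by rw [hH1]; exact natDegree_X⟩⟩
    | succ n ih =>
      obtain ⟨⟨hm0, hd0⟩, hm1, hd1⟩ := ih
      have hlt := qha_H_lowdeg H hH0 hH1 hHrec hm1 hd1 hm0 hd0 (q ^ (n + 1 - 1) * (1 - q ^ (n + 1)))
      have hmul : (X * H (n+1)).Monic := monic_X.mul hm1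
      have hdmul : (X * H (n+1)).natDegree = n + 2 := by
        rw [monic_X.natDegree_mul hm1, hd1, natDegree_X]; omega
      constructor
      · exact ⟨hm1, hd1⟩
      constructor
      · rw [hHrec n, sub_eq_add_neg]
        exact hmul.add_of_left (by rwa [degree_neg])
      · rw [hHrec n]
        have := degree_sub_eq_left_of_degree_lt hlt
        rw [← hdmul]
        exact natDegree_eq_of_degree_eq this
  exact fun n => (key n).1

private lemma qha_H_parity : ∀ n : ℕ, ∀ x : ℝ, (H n).eval (-x) = (-1) ^ n * (H n).eval x := by
  have key : ∀ n : ℕ, (∀ x : ℝ, (H n).eval (-x) = (-1) ^ n * (H n).eval x) ∧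
      (∀ x : ℝ, (H (n+1)).eval (-x) = (-1) ^ (n+1) * (H (n+1)).eval x) := by
    intro n
    induction n with
    | zero => constructor <;> intro x <;> simp [hH0, hH1]
    | succ n ih =>
      obtain ⟨ih0, ih1⟩ := ih
      refine ⟨ih1, fun x => ?_⟩
      rw [hHrec n]
      simp only [eval_sub, eval_mul, eval_C, eval_X, ih0 x, ih1 x]
      ring
  exact fun n => (key n).1

end HSec

section DqHSec
variable (hq0 : 0 < q) (hq1 : q < 1)
  (H : ℕ → Polynomial ℝ) (hH0 : H 0 = 1) (hH1 : H 1 = X)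
  (hHrec : ∀ n : ℕ, H (n + 2) = X * H (n + 1) - C (q ^ (n + 1 - 1) * (1 - q ^ (n + 1))) * H n)
  (Dq : Polynomial ℝ → Polynomial ℝ)
  (dq_sub : ∀ p r : Polynomial ℝ, Dq (p - r) = Dq p - Dq r)
  (dq_Cmul : ∀ (c : ℝ) (p : Polynomial ℝ), Dq (C c * p) = C c * Dq p)
  (dq_X : Dq X = 1)
  (dq_one : Dq 1 = 0)
  (dq_mul : ∀ u v : Polynomial ℝ, Dq (u * v) = u * Dq v + v.comp (C q * X) * Dq u)
include hq0 hq1 hH0 hH1 hHrec dq_sub dq_Cmul dq_X dq_one dq_mul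
private lemma qha_dq_H : ∀ n : ℕ, Dq (H (n + 1)) = C ((1 - q ^ (n + 1)) / (1 - q)) * H n := by
  have h1q : (1 : ℝ) - q ≠ 0 := by intro h'; linarith
  have dq_Xmul : ∀ v : Polynomial ℝ, Dq (X * v) = v + C q * X * Dq v := by
    intro v
    rw [mul_comm, dq_mul v X, dq_X, mul_one, X_comp]
  have key : ∀ n : ℕ, Dq (H (n + 1)) = C ((1 - q ^ (n + 1)) / (1 - q)) * H n ∧
      Dq (H (n + 2)) = C ((1 - q ^ (n + 2)) / (1 - q)) * H (n + 1) := by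
    intro n
    induction n with
    | zero =>
      constructor
      · rw [hH1, dq_X, hH0, pow_one, div_self h1q, C_1, mul_one]
      · have h2 : H 2 = X * X - C (1 - q) * 1 := by
          have h := hHrec 0
          have hcoef : q ^ (0 + 1 - 1) * (1 - q ^ (0 + 1)) = 1 - q := by norm_num
          rw [hcoef] at h
          rw [h, hH1, hH0]
        rw [h2, dq_sub, dq_Cmul, dq_one, mul_zero, sub_zero, dq_Xmul, dq_X, mul_one, hH1]
        have hc : (1 - q ^ 2) / (1 - q) = 1 + q := by field_simp; ring
        rw [hc, C_add, C_1]
        ring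
    | succ n ih =>
      obtain ⟨ih0, ih1⟩ := ih
      refine ⟨ih1, ?_⟩
      have hrec1 := hHrec (n + 1)
      have hrec0 := hHrec n
      simp only [Nat.add_sub_cancel] at hrec1 hrec0
      rw [hrec1, dq_sub, dq_Cmul, dq_Xmul, ih1, ih0]
      have hXH : X * H (n + 1) = H (n + 2) + C (q ^ n * (1 - q ^ (n + 1))) * H n := by
        rw [hrec0]; ring
      have hre : C q * X * (C ((1 - q ^ (n + 2)) / (1 - q)) * H (n + 1))
          = C q * C ((1 - q ^ (n + 2)) / (1 - q)) * (X * H (n + 1)) := by ring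
      rw [hre, hXH]
      have e1 : (1 : ℝ) + q * ((1 - q ^ (n + 2)) / (1 - q)) = (1 - q ^ (n + 1 + 2)) / (1 - q) := by
        field_simp; ring
      have e2 : q * ((1 - q ^ (n + 2)) / (1 - q)) * (q ^ n * (1 - q ^ (n + 1)))
          = q ^ (n + 1) * (1 - q ^ (n + 1 + 1)) * ((1 - q ^ (n + 1)) / (1 - q)) := by
        field_simp; ring
      have E1 : (1 : Polynomial ℝ) + C q * C ((1 - q ^ (n + 2)) / (1 - q))
          = C ((1 - q ^ (n + 1 + 2)) / (1 - q)) := by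
        rw [← C_mul, ← C_1 (R := ℝ), ← C_add]
        exact congrArg C e1
      have E2 : C q * C ((1 - q ^ (n + 2)) / (1 - q)) * C (q ^ n * (1 - q ^ (n + 1)))
          = C (q ^ (n + 1) * (1 - q ^ (n + 1 + 1))) * C ((1 - q ^ (n + 1)) / (1 - q)) := by
        rw [← C_mul, ← C_mul, ← C_mul]
        exact congrArg C e2
      linear_combination H (n + 2) * E1 + H n * E2
  exact fun n => (key n).1

end DqHSec

section LSec
variable (hq0 : 0 < q) (hq1 : q < 1) (w : ℝ → ℝ)
    (hw : ∀ x : ℝ, w x = (∏' j : ℕ, (1 - x * q ^ (j + 1))) * (∏' j : ℕ, (1 + x * q ^ (j + 1))))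
include hq0 hq1 hw
omit hw in
private lemma qha_qk_le (k : ℕ) : |(q ^ k : ℝ)| ≤ 1 := by
  rw [abs_pow, abs_of_pos hq0]
  exact pow_le_one₀ hq0.le hq1.le

omit hw in
private lemma qha_qk_le' (k : ℕ) : |(-(q ^ k) : ℝ)| ≤ 1 := by
  rw [abs_neg]; exact qha_qk_le hq0 hq1 k

private lemma qha_s_gen (p : Polynomial ℝ) (c : ℕ → ℝ) (hc : ∀ k, |c k| ≤ 1) (s : ℕ → ℝ)
    (hs : ∀ k, s k = q ^ k ∨ s k = -(q ^ k)) :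
    Summable fun k : ℕ => q ^ k * (c k * (p.eval (s k) * w (s k))) := by
  obtain ⟨M, hM0, hM⟩ := qha_poly_bound p
  set E := Real.exp (q / ((1 - q) * (1 - q))) * Real.exp (q / ((1 - q) * (1 - q))) with hE
  have hE0 : 0 ≤ E := by positivity
  apply qha_summable_master hq0 hq1 _ (M * E)
  intro k
  have hqk : |s k| ≤ 1 := by
    rcases hs k with h | h <;> rw [h]
    · exact qha_qk_le hq0 hq1 k
    · exact qha_qk_le' hq0 hq1 k
  have hwk := qha_w_pos_le hq0 hq1 w hw hqk
  have h1 : |q ^ k * (c k * (p.eval (s k) * w (s k)))|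
      = q ^ k * (|c k| * (|p.eval (s k)| * |w (s k)|)) := by
    rw [abs_mul, abs_mul, abs_mul, abs_of_pos (pow_pos hq0 k)]
  rw [h1, mul_comm (M * E) (q ^ k)]
  apply mul_le_mul_of_nonneg_left _ (pow_pos hq0 k).le
  calc |c k| * (|p.eval (s k)| * |w (s k)|)
      ≤ 1 * (M * E) := by
        apply mul_le_mul (hc k) _ (by positivity) zero_le_one
        exact mul_le_mul (hM _ hqk) (by rw [abs_of_pos hwk.1]; exact hwk.2)
          (abs_nonneg _) hM0
    _ = M * E := one_mul _

private lemma qha_s_pos (p : Polynomial ℝ) :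
    Summable fun k : ℕ => q ^ k * (p.eval (q ^ k) * w (q ^ k)) := by
  have := qha_s_gen hq0 hq1 w hw p (fun _ => 1) (fun k => by norm_num)
    (fun k => q ^ k) (fun k => Or.inl rfl)
  exact this.congr fun k => by simp

private lemma qha_s_neg (p : Polynomial ℝ) :
    Summable fun k : ℕ => q ^ k * (p.eval (-(q ^ k)) * w (-(q ^ k))) := by
  have := qha_s_gen hq0 hq1 w hw p (fun _ => 1) (fun k => by norm_num)
    (fun k => -(q ^ k)) (fun k => Or.inr rfl)
  exact this.congr fun k => by simp

private lemma qha_s_sq (p : Polynomial ℝ) :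
    Summable fun k : ℕ => q ^ k * q ^ k * (p.eval (q ^ k) * w (q ^ k)) := by
  have := qha_s_gen hq0 hq1 w hw p (fun k => q ^ k) (fun k => qha_qk_le hq0 hq1 k)
    (fun k => q ^ k) (fun k => Or.inl rfl)
  exact this.congr fun k => by ring

private lemma qha_summable (p : Polynomial ℝ) :
    Summable fun k : ℕ => q ^ k *
      (p.eval (q ^ k) * w (q ^ k) + p.eval (-(q ^ k)) * w (-(q ^ k))) := by
  have := (qha_s_pos hq0 hq1 w hw p).add (qha_s_neg hq0 hq1 w hw p)
  exact this.congr fun k => by ring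

private lemma qha_L_add (p r : Polynomial ℝ) :
    qhaL q w (p + r) = qhaL q w p + qhaL q w r := by
  unfold qhaL
  rw [← mul_add, ← Summable.tsum_add (qha_summable hq0 hq1 w hw p) (qha_summable hq0 hq1 w hw r)]
  congr 1
  apply tsum_congr
  intro k
  simp only [eval_add]
  ring

private lemma qha_L_Cmul (c : ℝ) (p : Polynomial ℝ) :
    qhaL q w (C c * p) = c * qhaL q w p := by
  unfold qhaL
  have e : (∑' k : ℕ, q ^ k * ((C c * p).eval (q ^ k) * w (q ^ k)
        + (C c * p).eval (-(q ^ k)) * w (-(q ^ k))))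
      = ∑' k : ℕ, c * (q ^ k *
        (p.eval (q ^ k) * w (q ^ k) + p.eval (-(q ^ k)) * w (-(q ^ k)))) := by
    apply tsum_congr
    intro k; simp only [eval_mul, eval_C]; ring
  rw [e, tsum_mul_left]
  ring

omit hq0 hq1 hw in
private lemma qha_L_zero : qhaL q w 0 = 0 := by
  unfold qhaL
  simp

private lemma qha_L_sub (p r : Polynomial ℝ) :
    qhaL q w (p - r) = qhaL q w p - qhaL q w r := by
  have h1 : p - r = p + C (-1) * r := by
    rw [map_neg, C_1]; ring
  rw [h1, qha_L_add hq0 hq1 w hw, qha_L_Cmul hq0 hq1 w hw]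
  ring

private lemma qha_L_odd (p : Polynomial ℝ) (hodd : ∀ x : ℝ, p.eval (-x) = -p.eval x) :
    qhaL q w p = 0 := by
  unfold qhaL
  have : ∀ k : ℕ, q ^ k *
      (p.eval (q ^ k) * w (q ^ k) + p.eval (-(q ^ k)) * w (-(q ^ k))) = 0 := by
    intro k
    rw [hodd (q ^ k), qha_w_even w hw (q ^ k)]
    ring
  rw [tsum_congr this]
  simp

section IBP
variable (Dq : Polynomial ℝ → Polynomial ℝ)
    (hDq : ∀ p : Polynomial ℝ, C (q - 1) * X * Dq p = p.comp (C q * X) - p)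

include hDq

omit hq0 hq1 hw in
private lemma qha_dq_even (hq1 : q < 1) (p : Polynomial ℝ)
    (hodd : ∀ x : ℝ, p.eval (-x) = -p.eval x) :
    ∀ x : ℝ, (Dq p).eval (-x) = (Dq p).eval x := by
  have key : ∀ x : ℝ, x ≠ 0 → (Dq p).eval (-x) = (Dq p).eval x := by
    intro x hx
    have h1 := qha_dq_eval Dq hDq p x
    have h2 := qha_dq_eval Dq hDq p (-x)
    rw [show q * -x = -(q * x) from by ring, hodd (q * x), hodd x] at h2
    have hq1' : q - 1 ≠ 0 := by intro h'; linarith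
    have h3 : (q - 1) * x * (Dq p).eval (-x) = (q - 1) * x * (Dq p).eval x := by
      linear_combination (-1 : ℝ) * h2 - h1
    exact mul_left_cancel₀ (mul_ne_zero hq1' hx) h3
  intro x
  have hpoly : (Dq p).comp (-X) - Dq p = 0 := by
    apply Polynomial.eq_zero_of_infinite_isRoot
    apply Set.Infinite.mono (s := {x : ℝ | x ≠ 0})
    · intro y hy
      simp only [Set.mem_setOf_eq, IsRoot.def, eval_sub, eval_comp, eval_neg, eval_X]
      rw [key y hy]
      ring
    · have he : ({x : ℝ | x ≠ 0}) = ({(0 : ℝ)} : Set ℝ)ᶜ := by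
        ext y; simp
      rw [he]
      exact (Set.finite_singleton (0 : ℝ)).infinite_compl
  have h4 := congrArg (eval x) hpoly
  simp only [eval_sub, eval_comp, eval_neg, eval_X, eval_zero] at h4
  linarith

private lemma qha_L_ibp (p : Polynomial ℝ) (hodd : ∀ x : ℝ, p.eval (-x) = -p.eval x) :
    qhaL q w (X * p) = (1 - q) * qhaL q w (Dq p) := by
  have h1q : (0 : ℝ) < 1 - q := by linarith
  have hodd0 : p.eval 0 = 0 := by
    have := hodd 0; rw [neg_zero] at this; linarith
  have hDqev := qha_dq_even Dq hDq hq1 p hodd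
  set A : ℕ → ℝ := fun k => q ^ k * ((Dq p).eval (q ^ k) * w (q ^ k)) with hA
  set B : ℕ → ℝ := fun k => q ^ k * q ^ k * (p.eval (q ^ k) * w (q ^ k)) with hB
  set g : ℕ → ℝ := fun k => (1 - q ^ k * q ^ k) * (p.eval (q ^ k) * w (q ^ k)) with hg
  have SA : Summable A := qha_s_pos hq0 hq1 w hw (Dq p)
  have SB : Summable B := qha_s_sq hq0 hq1 w hw p
  have key : ∀ k : ℕ, (1 - q) * A k - B k = g k - g (k + 1) := by
    intro k
    have h1 : (q - 1) * q ^ k * (Dq p).eval (q ^ k) = p.eval (q ^ (k+1)) - p.eval (q ^ k) := by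
      have := qha_dq_eval Dq hDq p (q ^ k)
      rwa [← pow_succ'] at this
    have h2 : w (q ^ k) = (1 - q ^ (k+1) * q ^ (k+1)) * w (q ^ (k+1)) := by
      have := qha_w_func hq0 hq1 w hw (qha_qk_le hq0 hq1 k)
      rwa [← pow_succ'] at this
    simp only [hA, hB, hg]
    linear_combination (-(w (q ^ k))) * h1 - p.eval (q ^ (k+1)) * h2
  have Sd : Summable fun k => g k - g (k + 1) :=
    ((SA.mul_left (1 - q)).sub SB).congr key
  have gtend : Tendsto g atTop (nhds 0) := by
    have hqt : Tendsto (fun k : ℕ => q ^ k) atTop (nhds 0) :=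
      tendsto_pow_atTop_nhds_zero_of_lt_one hq0.le hq1
    have hP : Tendsto (fun k : ℕ => p.eval (q ^ k)) atTop (nhds 0) := by
      have := (p.continuous.tendsto 0).comp hqt
      rwa [hodd0] at this
    set E := Real.exp (q / ((1 - q) * (1 - q))) * Real.exp (q / ((1 - q) * (1 - q))) with hE
    have hbound : ∀ k : ℕ, ‖g k‖ ≤ E * |p.eval (q ^ k)| := by
      intro k
      have hqk := qha_qk_le hq0 hq1 k
      have hwk := qha_w_pos_le hq0 hq1 w hw hqk
      have hq1' : q ^ k ≤ 1 := by
        rwa [abs_of_pos (pow_pos hq0 k)] at hqk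
      have hq01 : 0 ≤ q ^ k * q ^ k ∧ q ^ k * q ^ k ≤ 1 := by
        constructor
        · positivity
        · nlinarith [pow_pos hq0 k]
      have hne : ‖g k‖ = |1 - q ^ k * q ^ k| * (|p.eval (q ^ k)| * |w (q ^ k)|) := by
        simp only [hg, Real.norm_eq_abs, abs_mul]
      rw [hne]
      calc |1 - q ^ k * q ^ k| * (|p.eval (q ^ k)| * |w (q ^ k)|)
          ≤ 1 * (|p.eval (q ^ k)| * E) := by
            apply mul_le_mul _ _ (by positivity) zero_le_one
            · rw [abs_of_nonneg (by linarith [hq01.2])]; linarith [hq01.1]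
            · apply mul_le_mul_of_nonneg_left _ (abs_nonneg _)
              rw [abs_of_pos hwk.1]; exact hwk.2
        _ = E * |p.eval (q ^ k)| := by ring
    apply squeeze_zero_norm hbound
    have := (hP.abs).const_mul E
    simpa using this
  have tsum0 : ∑' k : ℕ, (g k - g (k + 1)) = 0 := by
    rw [qha_telescope g Sd gtend]
    simp only [hg, pow_zero, one_mul]
    ring
  have eq1 : ∑' k, B k = (1 - q) * ∑' k, A k := by
    have h : ∑' k, ((1 - q) * A k - B k) = ∑' k, (g k - g (k + 1)) := tsum_congr key
    rw [tsum0] at h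
    rw [Summable.tsum_sub (SA.mul_left (1 - q)) SB, tsum_mul_left] at h
    linarith [h.symm]
  have eL : qhaL q w (X * p) = (1 - q) * ∑' k, (2 * B k) := by
    unfold qhaL
    congr 1
    apply tsum_congr
    intro k
    simp only [eval_mul, eval_X, hB]
    rw [hodd (q ^ k), qha_w_even w hw (q ^ k)]
    ring
  have eR : qhaL q w (Dq p) = (1 - q) * ∑' k, (2 * A k) := by
    unfold qhaL
    congr 1
    apply tsum_congr
    intro k
    rw [hDqev (q ^ k), qha_w_even w hw (q ^ k)]
    simp only [hA]
    ring
  rw [eL, eR, tsum_mul_left, tsum_mul_left, eq1]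
  ring

end IBP
end LSec

private lemma qha_orth {q : ℝ} (hq0 : 0 < q) (hq1 : q < 1) (w : ℝ → ℝ)
    (H : ℕ → Polynomial ℝ) (Dq : Polynomial ℝ → Polynomial ℝ)
    (hH0 : H 0 = 1)
    (hHrec : ∀ n : ℕ, H (n + 2) = X * H (n + 1) - C (q ^ (n + 1 - 1) * (1 - q ^ (n + 1))) * H n)
    (Hpar : ∀ n : ℕ, ∀ x : ℝ, (H n).eval (-x) = (-1) ^ n * (H n).eval x)
    (dqH : ∀ n : ℕ, Dq (H (n + 1)) = C ((1 - q ^ (n + 1)) / (1 - q)) * H n)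
    (dq_mul : ∀ u v : Polynomial ℝ, Dq (u * v) = u * Dq v + v.comp (C q * X) * Dq u)
    (dq_pow : ∀ m : ℕ, Dq (X ^ (m + 1)) = C ((1 - q ^ (m + 1)) / (1 - q)) * X ^ m)
    (L_add : ∀ p r : Polynomial ℝ, qhaL q w (p + r) = qhaL q w p + qhaL q w r)
    (L_Cmul : ∀ (c : ℝ) (p : Polynomial ℝ), qhaL q w (C c * p) = c * qhaL q w p)
    (L_sub : ∀ p r : Polynomial ℝ, qhaL q w (p - r) = qhaL q w p - qhaL q w r)
    (L_odd : ∀ p : Polynomial ℝ, (∀ x : ℝ, p.eval (-x) = -p.eval x) → qhaL q w p = 0)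
    (L_ibp : ∀ p : Polynomial ℝ, (∀ x : ℝ, p.eval (-x) = -p.eval x) →
      qhaL q w (X * p) = (1 - q) * qhaL q w (Dq p)) :
    ∀ n m : ℕ, m < n → qhaL q w (H n * X ^ m) = 0 := by
  have hoddHX : ∀ n m : ℕ, ¬ 2 ∣ (n + m) →
      (∀ x : ℝ, (H n * X ^ m).eval (-x) = -(H n * X ^ m).eval x) := by
    intro n m hnm x
    have hodd : Odd (n + m) := Nat.odd_iff.mpr (Nat.not_even_iff.mp (fun h => hnm h.two_dvd))
    rw [eval_mul, eval_mul, eval_pow, eval_pow, eval_X, eval_X, Hpar n x, neg_pow x m]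
    have hs : (-1 : ℝ) ^ n * (-1 : ℝ) ^ m = -1 := by
      rw [← pow_add]; exact Odd.neg_one_pow hodd
    linear_combination (eval x (H n) * x ^ m) * hs
  -- main strong induction on n + m
  have main : ∀ N : ℕ, ∀ n m : ℕ, n + m = N → m < n → qhaL q w (H n * X ^ m) = 0 := by
    intro N
    induction N using Nat.strong_induction_on with
    | _ N ih =>
      intro n m hNm hmn
      by_cases hpar : 2 ∣ (n + m)
      case neg => exact L_odd _ (hoddHX n m hpar)
      case pos =>
        match m, hmn with
        | 0, hmn =>
          -- n even, n ≥ 2 (n > 0 and even)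
          obtain ⟨n', rfl⟩ : ∃ n', n = n' + 2 := by
            rcases hpar with ⟨t, ht⟩
            refine ⟨n - 2, by omega⟩
          have hrec := hHrec n'
          rw [Nat.add_sub_cancel] at hrec
          have hXH : qhaL q w (X * H (n' + 1)) =
              (1 - q) * ((1 - q ^ (n' + 1)) / (1 - q)) * qhaL q w (H n') := by
            have hodd1 : ∀ x : ℝ, (H (n' + 1)).eval (-x) = -(H (n' + 1)).eval x := by
              intro x
              rw [Hpar (n' + 1) x]
              have ho : Odd (n' + 1) := by
                rcases hpar with ⟨t, ht⟩
                refine Nat.odd_iff.mpr ?_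
                omega
              rw [Odd.neg_one_pow ho]
              ring
            rw [L_ibp (H (n' + 1)) hodd1, dqH n', L_Cmul]
            ring
          have e0 : qhaL q w (H (n' + 2) * X ^ 0) = qhaL q w (H (n' + 2)) := by
            rw [pow_zero, mul_one]
          rw [e0, hrec, L_sub, L_Cmul, hXH]
          rcases Nat.eq_zero_or_pos n' with h0 | hpos
          · subst h0
            have h1q : (1 : ℝ) - q ≠ 0 := by intro h'; linarith
            field_simp
            ring
          · have hz : qhaL q w (H n') = 0 := by
              have := ih (n' + 0) (by omega) n' 0 rfl (by omega)
              rwa [pow_zero, mul_one] at this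
            rw [hz]; ring
        | 1, hmn =>
          obtain ⟨n'', rfl⟩ : ∃ k, n = k + 1 := ⟨n - 1, by omega⟩
          have hodd1 : ∀ x : ℝ, (H (n'' + 1)).eval (-x) = -(H (n'' + 1)).eval x := by
            intro x
            rw [Hpar (n'' + 1) x]
            have ho : Odd (n'' + 1) := by
              rcases hpar with ⟨t, ht⟩
              refine Nat.odd_iff.mpr ?_
              omega
            rw [Odd.neg_one_pow ho]
            ring
          have e1 : H (n'' + 1) * X ^ 1 = X * H (n'' + 1) := by ring
          rw [e1, L_ibp (H (n'' + 1)) hodd1, dqH n'', L_Cmul]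
          have hz : qhaL q w (H n'') = 0 := by
            obtain ⟨k, rfl⟩ : ∃ k, n'' = k + 2 := by
              rcases hpar with ⟨t, ht⟩
              exact ⟨n'' - 2, by omega⟩
            have := ih (k + 2 + 0) (by omega) (k + 2) 0 rfl (by omega)
            rwa [pow_zero, mul_one] at this
          rw [hz]; ring
        | (m'' + 2), hmn =>
          obtain ⟨n''', rfl⟩ : ∃ k, n = k + 1 := ⟨n - 1, by omega⟩
          have hoddf : ∀ x : ℝ, (H (n''' + 1) * X ^ (m'' + 1)).eval (-x)
              = -(H (n''' + 1) * X ^ (m'' + 1)).eval x := by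
            apply hoddHX
            rcases hpar with ⟨t, ht⟩
            omega
          have e1 : H (n''' + 1) * X ^ (m'' + 2) = X * (H (n''' + 1) * X ^ (m'' + 1)) := by
            ring
          rw [e1, L_ibp _ hoddf, dq_mul, dqH n''', dq_pow m'']
          have e2 : (X ^ (m'' + 1)).comp (C q * X) = C (q ^ (m'' + 1)) * X ^ (m'' + 1) := by
            rw [pow_comp, X_comp, mul_pow, C_pow]
          rw [e2]
          have e3 : H (n''' + 1) * (C ((1 - q ^ (m'' + 1)) / (1 - q)) * X ^ m'')
              = C ((1 - q ^ (m'' + 1)) / (1 - q)) * (H (n''' + 1) * X ^ m'') := by ring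
          have e4 : C (q ^ (m'' + 1)) * X ^ (m'' + 1) * (C ((1 - q ^ (n''' + 1)) / (1 - q)) * H n''')
              = C (q ^ (m'' + 1) * ((1 - q ^ (n''' + 1)) / (1 - q))) * (H n''' * X ^ (m'' + 1)) := by
            rw [C_mul]; ring
          rw [e3, e4, L_add, L_Cmul, L_Cmul]
          have hz1 : qhaL q w (H (n''' + 1) * X ^ m'') = 0 :=
            ih (n''' + 1 + m'') (by omega) (n''' + 1) m'' rfl (by omega)
          have hz2 : qhaL q w (H n''' * X ^ (m'' + 1)) = 0 :=
            ih (n''' + m'' + 1) (by omega) n''' (m'' + 1) (by omega) (by omega)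
          rw [hz1, hz2]
          ring
  exact fun n m hmn => main (n + m) n m rfl hmn

section FinHelp
variable {q : ℝ} (hq0 : 0 < q) (hq1 : q < 1) (w : ℝ → ℝ)
    (hw : ∀ x : ℝ, w x = (∏' j : ℕ, (1 - x * q ^ (j + 1))) * (∏' j : ℕ, (1 + x * q ^ (j + 1))))
include hq0 hq1 hw

private lemma qha_L_finsum (s : Finset ℕ) (F : ℕ → Polynomial ℝ) :
    qhaL q w (∑ i ∈ s, F i) = ∑ i ∈ s, qhaL q w (F i) := by
  induction s using Finset.induction_on with
  | empty => simpa using qha_L_zero w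
  | insert _ _ hnotmem ih =>
    rw [Finset.sum_insert hnotmem, Finset.sum_insert hnotmem,
      qha_L_add hq0 hq1 w hw, ih]

private lemma qha_mu0_pos : 0 < qhaL q w 1 := by
  unfold qhaL
  apply mul_pos (by linarith)
  apply Summable.tsum_pos (qha_summable hq0 hq1 w hw 1) _ 0
  · have hw1 := qha_w_pos_le hq0 hq1 w hw (qha_qk_le hq0 hq1 0)
    have hw2 := qha_w_pos_le hq0 hq1 w hw (qha_qk_le' hq0 hq1 0)
    simp only [pow_zero] at hw1 hw2
    simp only [eval_one, pow_zero, one_mul]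
    nlinarith [hw1.1, hw2.1]
  · intro k
    have hw1 := qha_w_pos_le hq0 hq1 w hw (qha_qk_le hq0 hq1 k)
    have hw2 := qha_w_pos_le hq0 hq1 w hw (qha_qk_le' hq0 hq1 k)
    have hqk : (0:ℝ) < q ^ k := pow_pos hq0 k
    simp only [eval_one, one_mul]
    nlinarith [hw1.1, hw2.1]
end FinHelp

end QHermAux



set_option maxHeartbeats 1000000

/-- Connection formula for the q-Hermite I-Sobolev type orthogonal polynomials:
`S_n = H_n - λ ([n]_q H_{n-1}(α) / (1 + λ K_{n-1,q}^{(1,1)}(α,α))) K_{n-1,q}^{(0,1)}(·,α)`,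
where `S_n` are the monic polynomials orthogonal with respect to
`⟨f,g⟩_λ = ⟨f,g⟩ + λ (D_q f)(α)(D_q g)(α)`, `⟨·,·⟩` being the q-Hermite I
(Jackson q-integral) inner product, and
`K_{n-1,q}^{(i,j)}(x,y) = ∑_{k=0}^{n-1} D_q^i H_k(x) D_q^j H_k(y)/h_k`. -/
theorem qHermite_sobolev_connection (q : ℝ) (hq0 : 0 < q) (hq1 : q < 1)
    (lam : ℝ) (hlam : 0 < lam) (α : ℝ) (hα : α ∉ Set.Icc (-1 : ℝ) 1)
    (H : ℕ → Polynomial ℝ) (hH0 : H 0 = 1) (hH1 : H 1 = X)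
    (hHrec : ∀ n : ℕ, H (n + 2) = X * H (n + 1) - C (q ^ (n + 1 - 1) * (1 - q ^ (n + 1))) * H n)
    (Dq : Polynomial ℝ → Polynomial ℝ)
    (hDq : ∀ p : Polynomial ℝ, C (q - 1) * X * Dq p = p.comp (C q * X) - p)
    (w : ℝ → ℝ)
    (hw : ∀ x : ℝ, w x = (∏' j : ℕ, (1 - x * q ^ (j + 1))) * (∏' j : ℕ, (1 + x * q ^ (j + 1))))
    (inner : Polynomial ℝ → Polynomial ℝ → ℝ)
    (hinner : ∀ f g : Polynomial ℝ, inner f g =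
      (1 - q) * ∑' k : ℕ, q ^ k *
        (f.eval (q ^ k) * g.eval (q ^ k) * w (q ^ k) +
          f.eval (-(q ^ k)) * g.eval (-(q ^ k)) * w (-(q ^ k))))
    (h : ℕ → ℝ) (hh : ∀ m : ℕ, h m = inner (H m) (H m))
    (sInner : Polynomial ℝ → Polynomial ℝ → ℝ)
    (hsInner : ∀ f g : Polynomial ℝ,
      sInner f g = inner f g + lam * (Dq f).eval α * (Dq g).eval α)
    (S : ℕ → Polynomial ℝ)
    (hSmonic : ∀ n : ℕ, (S n).Monic ∧ (S n).natDegree = n)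
    (hSorth : ∀ n : ℕ, ∀ p : Polynomial ℝ, p.natDegree < n → sInner (S n) p = 0) :
    ∀ n : ℕ,
      S (n + 1) = H (n + 1) -
        C (lam * ((1 - q ^ (n + 1)) / (1 - q) * (H n).eval α) /
            (1 + lam * ∑ k ∈ Finset.range (n + 1), ((Dq (H k)).eval α) ^ 2 / h k)) *
          (∑ k ∈ Finset.range (n + 1), C ((Dq (H k)).eval α / h k) * H k) := by
  intro n
  have h1q : (0:ℝ) < 1 - q := by linarith
  have dq_sub := qha_dq_sub Dq hDq hq1
  have dq_add := qha_dq_add Dq hDq hq1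
  have dq_Cmul := qha_dq_Cmul Dq hDq hq1
  have dq_X := qha_dq_X Dq hDq hq1
  have dq_one := qha_dq_one Dq hDq hq1
  have dq_mul := qha_dq_mul Dq hDq hq1
  have dq_pow := qha_dq_pow Dq hDq hq1
  have dq_zero : Dq 0 = 0 := by
    have := qha_dq_C Dq hDq hq1 0
    rwa [C_0] at this
  have Hmon := qha_H_monic H hH0 hH1 hHrec
  have Hpar := qha_H_parity H hH0 hH1 hHrec
  have dqH := qha_dq_H hq0 hq1 H hH0 hH1 hHrec Dq dq_sub dq_Cmul dq_X dq_one dq_mul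
  have L_add := qha_L_add hq0 hq1 w hw
  have L_Cmul := qha_L_Cmul hq0 hq1 w hw
  have L_sub := qha_L_sub hq0 hq1 w hw
  have L_odd := qha_L_odd hq0 hq1 w hw
  have L_ibp := qha_L_ibp hq0 hq1 w hw Dq hDq
  have L_finsum := qha_L_finsum hq0 hq1 w hw
  have orth := qha_orth hq0 hq1 w H Dq hH0 hHrec Hpar dqH dq_mul dq_pow
    L_add L_Cmul L_sub L_odd L_ibp
  have innerL : ∀ f g : Polynomial ℝ, inner f g = qhaL q w (f * g) := by
    intro f g
    rw [hinner]
    unfold qhaL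
    congr 1
    apply tsum_congr
    intro k
    simp only [eval_mul]
    try ring
  have orthP : ∀ (N : ℕ) (p : Polynomial ℝ), p.natDegree < N → qhaL q w (H N * p) = 0 := by
    intro N p hdeg
    have hps := p.as_sum_range' (p.natDegree + 1) (lt_add_one _)
    have e1 : H N * p = ∑ i ∈ Finset.range (p.natDegree + 1),
        (C (p.coeff i) * (H N * X ^ i)) := by
      conv_lhs => rw [hps]
      rw [Finset.mul_sum]
      apply Finset.sum_congr rfl
      intro i _
      rw [← C_mul_X_pow_eq_monomial]
      ring
    rw [e1, L_finsum]
    apply Finset.sum_eq_zero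
    intro i hi
    simp only [Finset.mem_range] at hi
    rw [L_Cmul, orth N i (by omega)]
    ring
  have hscale : ∀ m : ℕ, h m = qhaL q w (H m * H m) := fun m => by rw [hh m, innerL]
  have diag : ∀ m : ℕ, qhaL q w (H m * H m) = qhaL q w (H m * X ^ m) := by
    intro m
    obtain ⟨hm, hd⟩ := Hmon m
    set r := H m - X ^ m with hr
    have e1 : H m * H m = H m * X ^ m + H m * r := by rw [hr]; ring
    rw [e1, L_add]
    rcases eq_or_ne r 0 with h0 | h0
    · rw [h0, mul_zero, qha_L_zero w]; ring
    · have hdr : r.natDegree < m := by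
        have hdeg : (H m).degree = (X ^ m : Polynomial ℝ).degree := by
          rw [degree_eq_natDegree hm.ne_zero, hd, degree_X_pow]
        have hlc : (H m).leadingCoeff = (X ^ m : Polynomial ℝ).leadingCoeff := by
          rw [hm.leadingCoeff, (monic_X_pow m (R := ℝ)).leadingCoeff]
        have hlt := Polynomial.degree_sub_lt hdeg hm.ne_zero hlc
        rw [degree_eq_natDegree hm.ne_zero, hd] at hlt
        exact (natDegree_lt_iff_degree_lt h0).mpr hlt
      rw [orthP m r hdr]
      ring
  have hrec : ∀ m : ℕ, h (m + 1) = q ^ m * (1 - q ^ (m + 1)) * h m := by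
    intro m
    rw [hscale (m+1), hscale m, diag (m+1), diag m]
    have hoddf : ∀ x : ℝ, (H (m+1) * X ^ m).eval (-x) = -(H (m+1) * X ^ m).eval x := by
      intro x
      rw [eval_mul, eval_mul, eval_pow, eval_pow, eval_X, eval_X, Hpar (m+1) x, neg_pow x m]
      have hs : (-1:ℝ)^(m+1) * (-1:ℝ)^m = -1 := by
        rw [← pow_add]
        exact Odd.neg_one_pow (Nat.odd_iff.mpr (by omega))
      linear_combination (eval x (H (m+1)) * x ^ m) * hs
    have e1 : H (m+1) * X ^ (m+1) = X * (H (m+1) * X ^ m) := by ring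
    rw [e1, L_ibp _ hoddf]
    cases m with
    | zero =>
      have e2 : H 1 * X ^ 0 = H 1 := by rw [pow_zero, mul_one]
      have e3 : H 0 * X ^ 0 = H 0 := by rw [pow_zero, mul_one]
      rw [e2, e3, dqH 0, L_Cmul]
      field_simp
    | succ m' =>
      rw [dq_mul (H (m'+1+1)) (X ^ (m'+1)), dq_pow m', dqH (m'+1)]
      have e2 : (X ^ (m'+1) : Polynomial ℝ).comp (C q * X) = C (q ^ (m'+1)) * X ^ (m'+1) := by
        rw [pow_comp, X_comp, mul_pow, C_pow]
      rw [e2]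
      have e3 : H (m'+1+1) * (C ((1 - q^(m'+1))/(1-q)) * X ^ m')
          = C ((1 - q^(m'+1))/(1-q)) * (H (m'+1+1) * X ^ m') := by ring
      have e4 : C (q^(m'+1)) * X^(m'+1) * (C ((1 - q^(m'+1+1))/(1-q)) * H (m'+1))
          = C (q^(m'+1) * ((1-q^(m'+1+1))/(1-q))) * (H (m'+1) * X^(m'+1)) := by
        rw [C_mul]; ring
      rw [e3, e4, L_add, L_Cmul, L_Cmul, orth (m'+1+1) m' (by omega)]
      field_simp
      try ring
  have mu0 := qha_mu0_pos hq0 hq1 w hw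
  have hpos : ∀ m : ℕ, 0 < h m := by
    intro m
    induction m with
    | zero =>
      rw [hscale 0, hH0, one_mul]
      exact mu0
    | succ m' ih =>
      rw [hrec m']
      have hlt : q ^ (m'+1) < 1 := pow_lt_one₀ hq0.le hq1 (by omega)
      have := pow_pos hq0 m'
      apply mul_pos (mul_pos this (by linarith)) ih
  have Zlem : ∀ (p : Polynomial ℝ), p.natDegree ≤ n →
      (∀ k, k ≤ n → qhaL q w (H k * p) = 0) → p = 0 := by
    intro p hdeg hall
    by_contra hp0
    set d := p.natDegree with hd
    have hlc : p.leadingCoeff ≠ 0 := leadingCoeff_ne_zero.mpr hp0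
    set r := p - C p.leadingCoeff * X ^ d with hr
    have hLr : qhaL q w (H d * r) = 0 := by
      rcases eq_or_ne r 0 with h0 | h0
      · rw [h0, mul_zero]; exact qha_L_zero w
      · apply orthP
        have hdeg2 : (C p.leadingCoeff * X ^ d : Polynomial ℝ).degree = p.degree := by
          rw [degree_C_mul_X_pow d hlc, degree_eq_natDegree hp0]
        have hlc2 : p.leadingCoeff = (C p.leadingCoeff * X ^ d : Polynomial ℝ).leadingCoeff := by
          rw [leadingCoeff_C_mul_X_pow]
        have hlt := Polynomial.degree_sub_lt hdeg2.symm hp0 hlc2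
        rw [degree_eq_natDegree hp0] at hlt
        exact (natDegree_lt_iff_degree_lt h0).mpr hlt
    have hsplit : qhaL q w (H d * p)
        = p.leadingCoeff * qhaL q w (H d * X ^ d) + qhaL q w (H d * r) := by
      have e1 : H d * p = C p.leadingCoeff * (H d * X ^ d) + H d * r := by rw [hr]; ring
      rw [e1, L_add, L_Cmul]
    have hne : qhaL q w (H d * p) ≠ 0 := by
      rw [hsplit, hLr, add_zero, ← diag d, ← hscale d]
      exact mul_ne_zero hlc (ne_of_gt (hpos d))
    exact hne (hall d hdeg)
  -- assembly
  set κ := ∑ k ∈ Finset.range (n + 1), ((Dq (H k)).eval α) ^ 2 / h k with hκ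
  set K := ∑ k ∈ Finset.range (n + 1), C ((Dq (H k)).eval α / h k) * H k with hK
  set dS := (Dq (S (n + 1))).eval α with hdS
  have hHkK : ∀ k, k ≤ n → qhaL q w (H k * K) = (Dq (H k)).eval α := by
    intro k hk
    have e1 : H k * K = ∑ j ∈ Finset.range (n+1),
        (C ((Dq (H j)).eval α / h j) * (H k * H j)) := by
      rw [hK, Finset.mul_sum]
      apply Finset.sum_congr rfl
      intro j _
      ring
    rw [e1, L_finsum, Finset.sum_eq_single k]
    · rw [L_Cmul, ← hscale k]
      exact div_mul_cancel₀ _ (ne_of_gt (hpos k))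
    · intro j hj hjk
      rw [L_Cmul]
      rcases lt_or_gt_of_ne hjk with hl | hl
      · rw [orthP k (H j) (by rw [(Hmon j).2]; omega)]
        ring
      · rw [mul_comm (H k) (H j), orthP j (H k) (by rw [(Hmon k).2]; omega)]
        ring
    · intro hk'
      exact absurd (Finset.mem_range.mpr (by omega)) hk'
  have hSd : ∀ k, k ≤ n → qhaL q w (H k * S (n+1)) = -(lam * dS * (Dq (H k)).eval α) := by
    intro k hk
    have h1 := hSorth (n+1) (H k) (by rw [(Hmon k).2]; omega)
    rw [hsInner] at h1
    have h2 : inner (S (n+1)) (H k) = qhaL q w (H k * S (n+1)) := by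
      rw [innerL, mul_comm]
    rw [h2] at h1
    rw [← hdS] at h1
    linear_combination h1
  have hHH : ∀ k, k ≤ n → qhaL q w (H k * H (n+1)) = 0 := by
    intro k hk
    rw [mul_comm]
    exact orthP (n+1) (H k) (by rw [(Hmon k).2]; omega)
  have hR : S (n+1) - H (n+1) + C (lam * dS) * K = 0 := by
    apply Zlem
    · apply le_trans (natDegree_add_le _ _)
      apply max_le
      · rcases eq_or_ne (S (n+1) - H (n+1)) 0 with h0 | h0
        · rw [h0]; simp
        · have hdeq : (S (n+1)).degree = (H (n+1)).degree := by
            rw [degree_eq_natDegree (hSmonic (n+1)).1.ne_zero, (hSmonic (n+1)).2,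
              degree_eq_natDegree (Hmon (n+1)).1.ne_zero, (Hmon (n+1)).2]
          have hlceq : (S (n+1)).leadingCoeff = (H (n+1)).leadingCoeff := by
            rw [(hSmonic (n+1)).1.leadingCoeff, (Hmon (n+1)).1.leadingCoeff]
          have hlt := Polynomial.degree_sub_lt hdeq (hSmonic (n+1)).1.ne_zero hlceq
          rw [degree_eq_natDegree (hSmonic (n+1)).1.ne_zero, (hSmonic (n+1)).2] at hlt
          have := (natDegree_lt_iff_degree_lt h0).mpr hlt
          omega
      · calc (C (lam*dS) * K).natDegree ≤ K.natDegree := natDegree_C_mul_le _ _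
          _ ≤ n := by
            rw [hK]
            apply natDegree_sum_le_of_forall_le
            intro i hi
            simp only [Finset.mem_range] at hi
            calc (C ((Dq (H i)).eval α / h i) * H i).natDegree
                ≤ (H i).natDegree := natDegree_C_mul_le _ _
              _ ≤ n := by rw [(Hmon i).2]; omega
    · intro k hk
      have e1 : H k * (S (n+1) - H (n+1) + C (lam*dS) * K)
          = H k * S (n+1) - H k * H (n+1) + C (lam*dS) * (H k * K) := by ring
      rw [e1, L_add, L_sub, L_Cmul, hSd k hk, hHH k hk, hHkK k hk]
      ring
  have EqA : S (n+1) = H (n+1) - C (lam * dS) * K := by linear_combination hR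
  have dqK : Dq K = ∑ k ∈ Finset.range (n+1), C ((Dq (H k)).eval α / h k) * Dq (H k) := by
    rw [hK]
    have hsum : ∀ (s : Finset ℕ) (F : ℕ → Polynomial ℝ),
        Dq (∑ i ∈ s, F i) = ∑ i ∈ s, Dq (F i) := by
      intro s
      induction s using Finset.induction_on with
      | empty => intro F; simpa using dq_zero
      | insert _ _ hnotmem ih =>
        intro F
        rw [Finset.sum_insert hnotmem, dq_add, ih, Finset.sum_insert hnotmem]
    rw [hsum]
    apply Finset.sum_congr rfl
    intro i _
    exact dq_Cmul _ _
  have hKev : (Dq K).eval α = κ := by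
    rw [dqK, eval_finset_sum, hκ]
    apply Finset.sum_congr rfl
    intro i _
    rw [eval_mul, eval_C, pow_two]
    ring
  have hdSeq : dS * (1 + lam * κ) = (1 - q ^ (n+1))/(1-q) * (H n).eval α := by
    have h1 := congrArg (fun p => (Dq p).eval α) EqA
    rw [dq_sub, dq_Cmul, dqH n, eval_sub, eval_mul, eval_mul, eval_C, eval_C, hKev,
      ← hdS] at h1
    linear_combination h1
  have hker : (0:ℝ) < 1 + lam * κ := by
    have hκ0 : 0 ≤ κ := by
      rw [hκ]
      apply Finset.sum_nonneg
      intro i _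
      exact div_nonneg (sq_nonneg _) (hpos i).le
    nlinarith
  rw [EqA]
  have hcoef : lam * dS = lam * ((1 - q^(n+1))/(1-q) * (H n).eval α) / (1 + lam * κ) := by
    rw [eq_div_iff (ne_of_gt hker)]
    linear_combination lam * hdSeq
  rw [hcoef]
end

section
/- With the notation of the Sobolev-type connection formula, the q-derivative of S_n at the mass point α satisfies (D_q S_n)(α;q) = [n]_q H_{n-1}(α;q) / (1 + λ K_{n-1,q}^{(1,1)}(α,α)). -/
open Polynomial Filter
namespace QHermiteAux


variable {q : ℝ}

lemma geom_summable (hq0 : 0 < q) (hq1 : q < 1) : Summable (fun j : ℕ => q ^ (j + 1)) := by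
  have := (summable_geometric_of_lt_one hq0.le hq1).mul_left q
  simpa [pow_succ, mul_comm] using this

lemma factor_pos (hq0 : 0 < q) (hq1 : q < 1) {x : ℝ} (hx : |x| ≤ 1) (j : ℕ) :
    0 < 1 + x * q ^ (j + 1) := by
  have h1 : |x * q ^ (j + 1)| ≤ q ^ (j + 1) := by
    rw [abs_mul, abs_of_pos (pow_pos hq0 _)]
    nlinarith [pow_pos hq0 (j+1)]
  have h2 : q ^ (j + 1) < 1 := pow_lt_one₀ hq0.le hq1 (Nat.succ_ne_zero j)
  have := abs_le.mp h1
  linarith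

lemma log_bound (hq0 : 0 < q) (hq1 : q < 1) {x : ℝ} (hx : |x| ≤ 1) (j : ℕ) :
    |Real.log (1 + x * q ^ (j + 1))| ≤ q ^ (j + 1) / (1 - q) := by
  set t := x * q ^ (j + 1) with ht
  have h1q : (0:ℝ) < 1 - q := by linarith
  have hpos : 0 < 1 + t := factor_pos hq0 hq1 hx j
  have htb : |t| ≤ q ^ (j + 1) := by
    rw [ht, abs_mul, abs_of_pos (pow_pos hq0 _)]
    nlinarith [pow_pos hq0 (j+1)]
  have hqj1 : q ^ (j + 1) ≤ q := by
    calc q ^ (j+1) ≤ q ^ 1 := pow_le_pow_of_le_one hq0.le hq1.le (by omega)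
    _ = q := pow_one q
  have htl := (abs_le.mp htb).1
  have htu := (abs_le.mp htb).2
  have hub : Real.log (1 + t) ≤ q ^ (j + 1) := by
    have := Real.log_le_sub_one_of_pos hpos
    linarith
  have h5 : 1 - q ≤ 1 + t := by linarith
  have hlb : -(q ^ (j + 1) / (1 - q)) ≤ Real.log (1 + t) := by
    have hinv : Real.log (1 + t)⁻¹ ≤ (1 + t)⁻¹ - 1 :=
      Real.log_le_sub_one_of_pos (inv_pos.mpr hpos)
    rw [Real.log_inv] at hinv
    have h3 : 1 - (1+t)⁻¹ ≤ Real.log (1 + t) := by linarith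
    have h4 : 1 - (1+t)⁻¹ = t / (1 + t) := by field_simp; ring
    have h6 : -(q ^ (j + 1) / (1-q)) ≤ t / (1 + t) := by
      rcases le_or_gt 0 t with hge | hlt
      · have : 0 ≤ t / (1+t) := div_nonneg hge hpos.le
        have : 0 ≤ q ^ (j+1) / (1-q) := by positivity
        linarith
      · rw [neg_le, ← neg_div]
        apply div_le_div₀ (by positivity) (by linarith) h1q h5
    linarith [h4 ▸ h3]
  rw [abs_le]
  refine ⟨hlb, hub.trans ?_⟩
  rw [le_div_iff₀ h1q]
  nlinarith [pow_pos hq0 (j+1), pow_le_one₀ hq0.le hq1.le (n := j+1)]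

lemma log_summable (hq0 : 0 < q) (hq1 : q < 1) {x : ℝ} (hx : |x| ≤ 1) :
    Summable (fun j : ℕ => Real.log (1 + x * q ^ (j + 1))) := by
  apply Summable.of_abs
  apply Summable.of_nonneg_of_le (fun j => abs_nonneg _) (fun j => log_bound hq0 hq1 hx j)
  exact (geom_summable hq0 hq1).div_const _

noncomputable def P (q x : ℝ) : ℝ := ∏' j : ℕ, (1 + x * q ^ (j + 1))

lemma P_eq_exp (hq0 : 0 < q) (hq1 : q < 1) {x : ℝ} (hx : |x| ≤ 1) :
    P q x = Real.exp (∑' j : ℕ, Real.log (1 + x * q ^ (j + 1))) := by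
  classical
  have h := Real.rexp_tsum_eq_tprod (f := fun j : ℕ => 1 + x * q ^ (j + 1))
    (fun j => factor_pos hq0 hq1 hx j)
    (log_summable hq0 hq1 hx)
  simpa [P] using h.symm

lemma P_pos (hq0 : 0 < q) (hq1 : q < 1) {x : ℝ} (hx : |x| ≤ 1) : 0 < P q x := by
  rw [P_eq_exp hq0 hq1 hx]; exact Real.exp_pos _

lemma P_le (hq0 : 0 < q) (hq1 : q < 1) {x : ℝ} (hx : |x| ≤ 1) :
    P q x ≤ Real.exp (q / ((1 - q) * (1 - q))) := by
  have h1q : (0:ℝ) < 1 - q := by linarith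
  rw [P_eq_exp hq0 hq1 hx]
  apply Real.exp_le_exp.mpr
  have h1 : ∀ j : ℕ, Real.log (1 + x * q ^ (j + 1)) ≤ q ^ (j+1) / (1 - q) := fun j =>
    (abs_le.mp (log_bound hq0 hq1 hx j)).2
  calc ∑' j : ℕ, Real.log (1 + x * q ^ (j + 1)) ≤ ∑' j : ℕ, q ^ (j+1) / (1-q) :=
        Summable.tsum_le_tsum h1 (log_summable hq0 hq1 hx) ((geom_summable hq0 hq1).div_const _)
  _ = (∑' j : ℕ, q ^ (j+1)) / (1 - q) := by rw [tsum_div_const]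
  _ = (q * ∑' j : ℕ, q ^ j) / (1 - q) := by
      congr 1
      rw [← tsum_mul_left]
      exact tsum_congr (fun j => by ring)
  _ = q / ((1 - q) * (1 - q)) := by
      rw [tsum_geometric_of_lt_one hq0.le hq1]
      field_simp

lemma P_peel (hq0 : 0 < q) (hq1 : q < 1) {x : ℝ} (hx : |x| ≤ 1) :
    P q x = (1 + x * q) * P q (q * x) := by
  have hqx : |q * x| ≤ 1 := by
    rw [abs_mul, abs_of_pos hq0]
    nlinarith [abs_nonneg x]
  rw [P_eq_exp hq0 hq1 hx, P_eq_exp hq0 hq1 hqx]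
  rw [Summable.tsum_eq_zero_add (log_summable hq0 hq1 hx)]
  rw [Real.exp_add]
  congr 1
  · simpa [mul_comm] using Real.exp_log (factor_pos hq0 hq1 hx 0)
  · congr 1
    exact tsum_congr (fun j => by rw [show q * x * q ^ (j+1) = x * q ^ (j+1+1) by ring])



section W
variable {w : ℝ → ℝ}

def HW (q : ℝ) (w : ℝ → ℝ) : Prop :=
  ∀ x : ℝ, w x = (∏' j : ℕ, (1 - x * q ^ (j + 1))) * (∏' j : ℕ, (1 + x * q ^ (j + 1)))


lemma w_eq_PP (hw : HW q w) (x : ℝ) : w x = P q (-x) * P q x := by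
  rw [hw x, P, P]
  congr 1
  exact tprod_congr (fun j => by ring)

lemma w_even (hw : HW q w) (x : ℝ) : w (-x) = w x := by
  rw [w_eq_PP hw, w_eq_PP hw, neg_neg, mul_comm]

lemma w_pos (hq0 : 0 < q) (hq1 : q < 1) (hw : HW q w) {x : ℝ} (hx : |x| ≤ 1) : 0 < w x := by
  rw [w_eq_PP hw]
  exact mul_pos (P_pos hq0 hq1 (by rwa [abs_neg])) (P_pos hq0 hq1 hx)

noncomputable def BB (q : ℝ) : ℝ := Real.exp (q / ((1 - q) * (1 - q))) ^ 2

lemma w_le (hq0 : 0 < q) (hq1 : q < 1) (hw : HW q w) {x : ℝ} (hx : |x| ≤ 1) : w x ≤ BB q := by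
  rw [w_eq_PP hw, BB, sq]
  have h1 := P_pos hq0 hq1 (x := -x) (by rwa [abs_neg])
  have h2 := P_pos hq0 hq1 hx
  exact mul_le_mul (P_le hq0 hq1 (by rwa [abs_neg])) (P_le hq0 hq1 hx) h2.le (Real.exp_pos _).le

lemma BB_pos : 0 < BB q := by rw [BB]; positivity

lemma w_peel (hq0 : 0 < q) (hq1 : q < 1) (hw : HW q w) {x : ℝ} (hx : |x| ≤ 1) : w x = (1 - q * x) * (1 + q * x) * w (q * x) := by
  have hmx : |(-x)| ≤ 1 := by rwa [abs_neg]
  rw [w_eq_PP hw, w_eq_PP hw, P_peel hq0 hq1 hx, P_peel hq0 hq1 hmx]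
  have : q * -x = -(q * x) := by ring
  rw [this]
  ring_nf

end W


lemma summable_of_bound (hq0 : 0 < q) (hq1 : q < 1) {u : ℕ → ℝ} {C : ℝ}
    (hb : ∀ k : ℕ, |u k| ≤ C * q ^ k) : Summable u := by
  apply Summable.of_abs
  apply Summable.of_nonneg_of_le (fun k => abs_nonneg _) hb
  exact (summable_geometric_of_lt_one hq0.le hq1).mul_left C

lemma poly_bound (p : Polynomial ℝ) :
    ∃ C : ℝ, 0 ≤ C ∧ ∀ x : ℝ, |x| ≤ 1 → |p.eval x| ≤ C := by
  refine ⟨∑ i ∈ Finset.range (p.natDegree + 1), |p.coeff i|,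
    Finset.sum_nonneg (fun i _ => abs_nonneg _), fun x hx => ?_⟩
  rw [Polynomial.eval_eq_sum_range]
  refine (Finset.abs_sum_le_sum_abs _ _).trans ?_
  apply Finset.sum_le_sum
  intro i _
  rw [abs_mul]
  have : |x ^ i| ≤ 1 := by
    rw [abs_pow]
    exact pow_le_one₀ (abs_nonneg x) hx
  nlinarith [abs_nonneg (p.coeff i), abs_nonneg (x ^ i)]

lemma qpow_le_one (hq0 : 0 < q) (hq1 : q < 1) (k : ℕ) : |q ^ k| ≤ 1 := by
  rw [abs_of_pos (pow_pos hq0 k)]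
  exact pow_le_one₀ hq0.le hq1.le

lemma qpow_ne (hq0 : 0 < q) (k : ℕ) : (q ^ k : ℝ) ≠ 0 := (pow_pos hq0 k).ne'

/-- Key telescoping lemma. -/
lemma telescope (hq0 : 0 < q) (hq1 : q < 1) (F g : ℝ → ℝ)
    (hrel : ∀ x : ℝ, x ≠ 0 → |x| ≤ 1 → F (q * x) - F x = (q - 1) * x * g x)
    (hsum : Summable (fun k : ℕ => q ^ k * (g (q ^ k) + g (-(q ^ k)))))
    (hlim : Tendsto (fun N : ℕ => F (q ^ N) - F (-(q ^ N))) atTop (nhds 0)) :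
    (1 - q) * ∑' k : ℕ, q ^ k * (g (q ^ k) + g (-(q ^ k))) = F 1 - F (-1) := by
  have hq1' : q - 1 ≠ 0 := by intro h; linarith
  have hpartial : ∀ N : ℕ, ∑ k ∈ Finset.range N, q ^ k * (g (q ^ k) + g (-(q ^ k)))
      = ((F (q ^ N) - F (-(q ^ N))) - (F 1 - F (-1))) / (q - 1) := by
    intro N
    have hterm : ∀ k : ℕ, q ^ k * (g (q ^ k) + g (-(q ^ k)))
        = ((fun m : ℕ => (F (q ^ m) - F (-(q ^ m))) / (q - 1)) (k + 1)
           - (fun m : ℕ => (F (q ^ m) - F (-(q ^ m))) / (q - 1)) k) := by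
      intro k
      have h1 := hrel (q ^ k) (qpow_ne hq0 k) (qpow_le_one hq0 hq1 k)
      have h2 := hrel (-(q ^ k)) (by simpa using qpow_ne hq0 k) (by simpa using qpow_le_one hq0 hq1 k)
      simp only
      rw [pow_succ']
      have e2 : q * -(q ^ k) = -(q * q ^ k) := by ring
      rw [e2] at h2
      rw [div_sub_div_same, eq_div_iff hq1']
      linear_combination h2 - h1
    calc ∑ k ∈ Finset.range N, q ^ k * (g (q ^ k) + g (-(q ^ k)))
        = ∑ k ∈ Finset.range N, ((fun m : ℕ => (F (q ^ m) - F (-(q ^ m))) / (q - 1)) (k + 1)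
           - (fun m : ℕ => (F (q ^ m) - F (-(q ^ m))) / (q - 1)) k) :=
          Finset.sum_congr rfl (fun k _ => hterm k)
      _ = (F (q ^ N) - F (-(q ^ N))) / (q - 1) - (F (q ^ 0) - F (-(q ^ 0))) / (q - 1) :=
          Finset.sum_range_sub (fun m : ℕ => (F (q ^ m) - F (-(q ^ m))) / (q - 1)) N
      _ = ((F (q ^ N) - F (-(q ^ N))) - (F 1 - F (-1))) / (q - 1) := by
          rw [pow_zero]; ring
  have htend : Tendsto (fun N : ℕ => ∑ k ∈ Finset.range N, q ^ k * (g (q ^ k) + g (-(q ^ k))))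
      atTop (nhds ((0 - (F 1 - F (-1))) / (q - 1))) := by
    simp only [hpartial]
    exact (hlim.sub tendsto_const_nhds).div_const (q - 1)
  have := hsum.hasSum.tendsto_sum_nat
  have heq := tendsto_nhds_unique this htend
  rw [heq]
  field_simp
  ring



/-- Hypothesis bundle for the H recurrence -/
def HRec (q : ℝ) (H : ℕ → Polynomial ℝ) : Prop :=
  H 0 = 1 ∧ H 1 = X ∧
  ∀ n : ℕ, H (n + 2) = X * H (n + 1) - C (q ^ n * (1 - q ^ (n + 1))) * H n

lemma hrec_of (H : ℕ → Polynomial ℝ) (hH0 : H 0 = 1) (hH1 : H 1 = X)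
    (hHrec : ∀ n : ℕ, H (n + 2) = X * H (n + 1) - C (q ^ (n + 1 - 1) * (1 - q ^ (n + 1))) * H n) :
    HRec q H := by
  refine ⟨hH0, hH1, fun n => ?_⟩
  have := hHrec n
  simpa [Nat.add_sub_cancel] using this

section HH
variable {H : ℕ → Polynomial ℝ} (hH : HRec q H)

lemma H_monic_natDegree (hH : HRec q H) : ∀ n, (H n).Monic ∧ (H n).natDegree = n := by
  obtain ⟨h0, h1, hrec⟩ := hH
  intro n
  induction n using Nat.twoStepInduction with
  | zero => rw [h0]; exact ⟨monic_one, natDegree_one⟩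
  | one => rw [h1]; exact ⟨monic_X, natDegree_X⟩
  | more n ih1 ih2 =>
    rw [hrec n]
    have hm : (X * H (n + 1)).Monic := monic_X.mul ih2.1
    have hd : (X * H (n + 1)).natDegree = n + 2 := by
      rw [natDegree_mul (X_ne_zero) ih2.1.ne_zero, natDegree_X, ih2.2]
      omega
    have hlt : (C (q ^ n * (1 - q ^ (n + 1))) * H n).natDegree < (X * H (n+1)).natDegree := by
      apply lt_of_le_of_lt (natDegree_C_mul_le _ _)
      rw [hd, ih1.2]; omega
    constructor
    · apply hm.sub_of_left
      refine lt_of_le_of_lt degree_le_natDegree ?_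
      rw [degree_eq_natDegree hm.ne_zero]
      exact_mod_cast hlt
    · rw [natDegree_sub_eq_left_of_natDegree_lt hlt, hd]

lemma H_eval_rec (hH : HRec q H) (n : ℕ) (x : ℝ) :
    (H (n + 2)).eval x = x * (H (n + 1)).eval x - q ^ n * (1 - q ^ (n + 1)) * (H n).eval x := by
  rw [hH.2.2 n]; simp

lemma diamond (hq : q ≠ 0) (hH : HRec q H) : ∀ k, ∀ x : ℝ,
    q ^ k * (1 - x ^ 2) * (H k).eval (x / q) = q ^ k * (H k).eval x - x * (H (k + 1)).eval x := by
  obtain ⟨h0, h1, hrec⟩ := hH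
  intro k
  induction k using Nat.twoStepInduction with
  | zero => intro x; rw [h0, h1]; simp; ring
  | one =>
    intro x
    have e2 : (H 2).eval x = x * x - (1 - q) := by
      rw [hrec 0]; simp [h0, h1]
    rw [h1, e2]
    simp only [eval_X]
    field_simp
    ring
  | more k ih1 ih2 =>
    intro x
    have r1 := H_eval_rec ⟨h0, h1, hrec⟩ k (x / q)
    have r2 := H_eval_rec ⟨h0, h1, hrec⟩ (k + 1) x
    have r3 := H_eval_rec ⟨h0, h1, hrec⟩ k x
    have i1 := ih1 x
    have i2 := ih2 x
    have hdiv : x / q * (H (k+1)).eval (x/q) * (q ^ (k+2) * (1 - x^2))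
        = q ^ (k+1) * x * ((1 - x^2) * (H (k+1)).eval (x/q)) := by
      field_simp; ring
    linear_combination (q^(k+2)*(1-x^2)) * r1 + x * i2 - (q^2*(q^k*(1-q^(k+1)))) * i1
      + x * r2 - q^(k+2) * r3 + hdiv
end HH


def HDq (q : ℝ) (Dq : Polynomial ℝ → Polynomial ℝ) : Prop :=
  ∀ p : Polynomial ℝ, C (q - 1) * X * Dq p = p.comp (C q * X) - p

section DQ
variable {Dq : Polynomial ℝ → Polynomial ℝ}

lemma CX_ne (hq1 : q ≠ 1) : (C (q - 1) * X : Polynomial ℝ) ≠ 0 :=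
  mul_ne_zero (C_ne_zero.mpr (sub_ne_zero.mpr hq1)) X_ne_zero

lemma hC : (C (q - 1) : Polynomial ℝ) = C q - 1 := by rw [C_sub, C_1]

lemma dq_unique (hq1 : q ≠ 1) (hDq : HDq q Dq) {p r : Polynomial ℝ}
    (hr : C (q - 1) * X * r = p.comp (C q * X) - p) : Dq p = r :=
  mul_left_cancel₀ (CX_ne hq1) ((hDq p).trans hr.symm)

lemma Dq_eval (hDq : HDq q Dq) (p : Polynomial ℝ) (x : ℝ) :
    (q - 1) * x * (Dq p).eval x = p.eval (q * x) - p.eval x := by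
  have h := congrArg (eval x) (hDq p)
  simp only [eval_mul, eval_sub, eval_comp, eval_C, eval_X] at h
  linear_combination h

lemma Dq_zero (hq1 : q ≠ 1) (hDq : HDq q Dq) : Dq 0 = 0 :=
  dq_unique hq1 hDq (by simp)

lemma Dq_one (hq1 : q ≠ 1) (hDq : HDq q Dq) : Dq 1 = 0 :=
  dq_unique hq1 hDq (by simp)

lemma Dq_X (hq1 : q ≠ 1) (hDq : HDq q Dq) : Dq X = 1 :=
  dq_unique hq1 hDq (by rw [X_comp, hC]; ring)

lemma Dq_Xmul (hq1 : q ≠ 1) (hDq : HDq q Dq) (p : Polynomial ℝ) :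
    Dq (X * p) = p + C q * X * Dq p := by
  apply dq_unique hq1 hDq
  rw [mul_comp, X_comp]
  linear_combination (C q * X) * (hDq p) + (X * p) * (hC (q := q))

lemma Dq_add (hq1 : q ≠ 1) (hDq : HDq q Dq) (p r : Polynomial ℝ) :
    Dq (p + r) = Dq p + Dq r := by
  apply dq_unique hq1 hDq
  rw [mul_add, hDq p, hDq r, add_comp]
  ring

lemma Dq_Cmul (hq1 : q ≠ 1) (hDq : HDq q Dq) (c : ℝ) (p : Polynomial ℝ) :
    Dq (C c * p) = C c * Dq p := by
  apply dq_unique hq1 hDq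
  have := hDq p
  calc C (q-1) * X * (C c * Dq p) = C c * (C (q-1) * X * Dq p) := by ring
  _ = C c * (p.comp (C q * X) - p) := by rw [this]
  _ = (C c * p).comp (C q * X) - C c * p := by rw [mul_comp, C_comp]; ring

lemma Dq_sub (hq1 : q ≠ 1) (hDq : HDq q Dq) (p r : Polynomial ℝ) :
    Dq (p - r) = Dq p - Dq r := by
  have h1 : p - r = p + C (-1) * r := by simp; ring
  rw [h1, Dq_add hq1 hDq, Dq_Cmul hq1 hDq]
  simp; ring

lemma Dq_sum (hq1 : q ≠ 1) (hDq : HDq q Dq) (m : ℕ) (f : ℕ → Polynomial ℝ) :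
    Dq (∑ k ∈ Finset.range m, f k) = ∑ k ∈ Finset.range m, Dq (f k) := by
  induction m with
  | zero => simpa using Dq_zero hq1 hDq
  | succ m ih => rw [Finset.sum_range_succ, Finset.sum_range_succ, Dq_add hq1 hDq, ih]

section withH
variable {H : ℕ → Polynomial ℝ}

lemma H_qshift (hH : HRec q H) : ∀ n, ∀ x : ℝ,
    (H (n + 1)).eval (q * x) - (H (n + 1)).eval x = -(1 - q ^ (n + 1)) * x * (H n).eval x := by
  obtain ⟨h0, h1, hrec⟩ := hH
  have hev : ∀ n (x : ℝ), (H (n + 2)).eval x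
      = x * (H (n + 1)).eval x - q ^ n * (1 - q ^ (n + 1)) * (H n).eval x := by
    intro n x; rw [hrec n]; simp
  intro n
  induction n using Nat.twoStepInduction with
  | zero => intro x; rw [h1, h0]; simp; ring
  | one =>
    intro x
    rw [hev 0 (q*x), hev 0 x, h1, h0]
    simp only [eval_X, eval_one]
    ring
  | more n ih1 ih2 =>
    intro x
    have r1 := hev (n + 1) (q * x)
    have r2 := hev (n + 1) x
    have r3 := hev n x
    have i1 := ih1 x
    have i2 := ih2 x
    linear_combination r1 - r2 + q * x * i2 - (q^(n+1) * (1 - q^(n+2))) * i1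
      + (q * (1 - q^(n+2)) * x) * r3

lemma DqH (hq1 : q ≠ 1) (hDq : HDq q Dq) (hH : HRec q H) (n : ℕ) :
    Dq (H (n + 1)) = C ((1 - q ^ (n + 1)) / (1 - q)) * H n := by
  apply eq_of_infinite_eval_eq
  apply Set.Infinite.mono (s := {x : ℝ | x ≠ 0})
  swap
  · exact (Set.finite_singleton (0:ℝ)).infinite_compl
  intro x hx
  simp only [Set.mem_setOf_eq] at hx ⊢
  have h1 := Dq_eval hDq (H (n + 1)) x
  have h2 := H_qshift hH n x
  have hq1' : q - 1 ≠ 0 := by simpa [sub_eq_zero] using hq1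
  have h1q : (1 : ℝ) - q ≠ 0 := sub_ne_zero.mpr (Ne.symm hq1)
  have hc : (q - 1) * ((1 - q ^ (n + 1)) / (1 - q)) = -(1 - q ^ (n + 1)) := by
    field_simp
    ring
  have : (q - 1) * x * (Dq (H (n+1))).eval x = (q - 1) * x * ((1 - q ^ (n + 1)) / (1 - q) * (H n).eval x) := by
    linear_combination h1 + h2 - x * (H n).eval x * hc
  have hne : (q - 1) * x ≠ 0 := mul_ne_zero hq1' hx
  have := mul_left_cancel₀ hne this
  simpa using this

end withH
end DQ

end QHermiteAux
namespace QHermiteAux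
section LP
variable {q : ℝ} {w : ℝ → ℝ} {H : ℕ → Polynomial ℝ}

/-- The orthogonality functional. -/
noncomputable def Lp (q : ℝ) (w : ℝ → ℝ) (p : Polynomial ℝ) : ℝ :=
  (1 - q) * ∑' k : ℕ, q ^ k *
    (p.eval (q ^ k) * w (q ^ k) + p.eval (-(q ^ k)) * w (-(q ^ k)))

lemma Lp_summand_summable (hq0 : 0 < q) (hq1 : q < 1) (hw : HW q w) (p : Polynomial ℝ) :
    Summable (fun k : ℕ => q ^ k *
      (p.eval (q ^ k) * w (q ^ k) + p.eval (-(q ^ k)) * w (-(q ^ k)))) := by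
  obtain ⟨C, hC0, hC⟩ := poly_bound p
  apply summable_of_bound hq0 hq1 (C := C * BB q * 2)
  intro k
  have hk := qpow_le_one hq0 hq1 k
  have hk' : |(-(q ^ k) : ℝ)| ≤ 1 := by rwa [abs_neg]
  have hw1 : |w (q ^ k)| ≤ BB q := by
    rw [abs_of_pos (w_pos hq0 hq1 hw hk)]; exact w_le hq0 hq1 hw hk
  have hw2 : |w (-(q ^ k))| ≤ BB q := by
    rw [abs_of_pos (w_pos hq0 hq1 hw hk')]; exact w_le hq0 hq1 hw hk'
  have h1 : |p.eval (q ^ k) * w (q ^ k)| ≤ C * BB q := by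
    rw [abs_mul]
    exact mul_le_mul (hC _ hk) hw1 (abs_nonneg _) hC0
  have h2 : |p.eval (-(q ^ k)) * w (-(q ^ k))| ≤ C * BB q := by
    rw [abs_mul]
    exact mul_le_mul (hC _ hk') hw2 (abs_nonneg _) hC0
  have habs : |q ^ k * (p.eval (q ^ k) * w (q ^ k) + p.eval (-(q ^ k)) * w (-(q ^ k)))|
      ≤ q ^ k * (C * BB q + C * BB q) := by
    rw [abs_mul, abs_of_pos (pow_pos hq0 k)]
    apply mul_le_mul_of_nonneg_left _ (pow_pos hq0 k).le
    exact (abs_add_le _ _).trans (add_le_add h1 h2)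
  calc |q ^ k * _| ≤ q ^ k * (C * BB q + C * BB q) := habs
  _ = C * BB q * 2 * q ^ k := by ring

lemma Lp_add (hq0 : 0 < q) (hq1 : q < 1) (hw : HW q w) (p r : Polynomial ℝ) :
    Lp q w (p + r) = Lp q w p + Lp q w r := by
  unfold Lp
  rw [← mul_add, ← Summable.tsum_add (Lp_summand_summable hq0 hq1 hw p) (Lp_summand_summable hq0 hq1 hw r)]
  congr 1
  apply tsum_congr
  intro k
  simp only [eval_add]
  ring

lemma Lp_Cmul (c : ℝ) (p : Polynomial ℝ) :
    Lp q w (C c * p) = c * Lp q w p := by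
  unfold Lp
  have h : ∀ k : ℕ,
      q ^ k * ((C c * p).eval (q ^ k) * w (q ^ k) + (C c * p).eval (-(q ^ k)) * w (-(q ^ k)))
      = c * (q ^ k * (p.eval (q ^ k) * w (q ^ k) + p.eval (-(q ^ k)) * w (-(q ^ k)))) := by
    intro k; simp only [eval_mul, eval_C]; ring
  rw [tsum_congr h, tsum_mul_left]
  ring

lemma Lp_sub (hq0 : 0 < q) (hq1 : q < 1) (hw : HW q w) (p r : Polynomial ℝ) :
    Lp q w (p - r) = Lp q w p - Lp q w r := by
  have h1 : p - r = p + C (-1) * r := by rw [map_neg, C_1]; ring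
  rw [h1, Lp_add hq0 hq1 hw, Lp_Cmul]
  ring

lemma Lp_sum (hq0 : 0 < q) (hq1 : q < 1) (hw : HW q w) (m : ℕ) (f : ℕ → Polynomial ℝ) :
    Lp q w (∑ k ∈ Finset.range m, f k) = ∑ k ∈ Finset.range m, Lp q w (f k) := by
  induction m with
  | zero =>
    simp only [Finset.range_zero, Finset.sum_empty]
    have : (0 : Polynomial ℝ) = C 0 * 0 := by simp
    rw [this, Lp_Cmul]; ring
  | succ m ih =>
    rw [Finset.sum_range_succ, Finset.sum_range_succ, Lp_add hq0 hq1 hw, ih]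

lemma Lp_one_pos (hq0 : 0 < q) (hq1 : q < 1) (hw : HW q w) : 0 < Lp q w 1 := by
  unfold Lp
  apply mul_pos (by linarith)
  apply Summable.tsum_pos (Lp_summand_summable hq0 hq1 hw 1) _ 0
  · have h1 : |(1:ℝ)| ≤ 1 := by norm_num
    have h2 : |(-1:ℝ)| ≤ 1 := by norm_num
    simp only [pow_zero, eval_one, one_mul]
    have := w_pos hq0 hq1 hw h1
    have := w_pos hq0 hq1 hw h2
    nlinarith
  · intro k
    have hk := qpow_le_one hq0 hq1 k
    have hk' : |(-(q ^ k) : ℝ)| ≤ 1 := by rwa [abs_neg]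
    have := w_pos hq0 hq1 hw hk
    have := w_pos hq0 hq1 hw hk'
    simp only [eval_one, one_mul]
    positivity

/-- Vanishing of the functional on `H (n+1)`. -/
lemma Lp_H_succ (hq0 : 0 < q) (hq1 : q < 1) (hw : HW q w) (hH : HRec q H) (n : ℕ) :
    Lp q w (H (n + 1)) = 0 := by
  have hqne : q ≠ 0 := hq0.ne'
  set F : ℝ → ℝ := fun x => (q - 1) * q ^ n *
    ((H n).eval (x / q) * ((1 - x ^ 2) * w x)) with hF
  have hrel : ∀ x : ℝ, x ≠ 0 → |x| ≤ 1 →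
      F (q * x) - F x = (q - 1) * x * ((H (n+1)).eval x * w x) := by
    intro x hx0 hx1
    have hpeel := w_peel hq0 hq1 hw hx1
    have hdia := diamond hqne ⟨hH.1, hH.2.1, hH.2.2⟩ n x
    have harg : q * x / q = x := by field_simp
    rw [hF]
    simp only
    rw [harg]
    -- F(qx) = (q-1)q^n * Hn(x) * ((1-(qx)^2) * w(qx)) and (1-(qx)^2)*w(qx) = w x
    have hW : (1 - (q*x)^2) * w (q*x) = w x := by
      rw [hpeel]; ring
    rw [hW]
    -- now: (q-1)q^n * (Hn(x)*w x - Hn(x/q)*((1-x²) w x)) = (q-1)x Hn+1(x) w x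
    -- diamond: q^n (1-x²) Hn(x/q) = q^n Hn x - x Hn+1 x
    linear_combination (-(q - 1) * w x) * hdia
  have hsum := Lp_summand_summable hq0 hq1 hw (H (n+1))
  have hlim : Tendsto (fun N : ℕ => F (q ^ N) - F (-(q ^ N))) atTop (nhds 0) := by
    have hKpos : (0:ℝ) < |q - 1| * q ^ n * BB q := by
      have : q - 1 ≠ 0 := by intro hc; linarith [hq1]
      have := BB_pos (q := q)
      positivity
    apply squeeze_zero_norm
      (a := fun N : ℕ =>
        (|q - 1| * q ^ n * BB q) * |(H n).eval (q ^ N / q) - (H n).eval (-(q ^ N) / q)|)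
      (f := fun N : ℕ => F (q ^ N) - F (-(q ^ N)))
    · intro N
      have hNle := qpow_le_one hq0 hq1 N
      have hNle' : |(-(q ^ N) : ℝ)| ≤ 1 := by rwa [abs_neg]
      have heven : w (-(q ^ N)) = w (q ^ N) := w_even hw _
      have hwb : |w (q ^ N)| ≤ BB q := by
        rw [abs_of_pos (w_pos hq0 hq1 hw hNle)]; exact w_le hq0 hq1 hw hNle
      have hx2 : |1 - ((q:ℝ) ^ N) ^ 2| ≤ 1 := by
        rw [abs_le]
        constructor
        · nlinarith [pow_pos hq0 N, pow_le_one₀ hq0.le hq1.le (n := N)]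
        · nlinarith [pow_pos hq0 N]
      rw [hF]
      simp only
      have hre : (q - 1) * q ^ n * ((H n).eval (q ^ N / q) * ((1 - (q ^ N) ^ 2) * w (q ^ N)))
          - (q - 1) * q ^ n * ((H n).eval (-(q ^ N) / q) * ((1 - (-(q ^ N)) ^ 2) * w (-(q ^ N))))
          = (q - 1) * q ^ n * ((1 - (q ^ N) ^ 2) * w (q ^ N))
            * ((H n).eval (q ^ N / q) - (H n).eval (-(q ^ N) / q)) := by
        rw [heven]; ring
      rw [hre]
      rw [norm_mul, Real.norm_eq_abs, Real.norm_eq_abs]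
      apply mul_le_mul_of_nonneg_right _ (abs_nonneg _)
      rw [abs_mul, abs_mul, abs_mul]
      rw [abs_of_pos (pow_pos hq0 n)]
      apply mul_le_mul_of_nonneg_left _ (by positivity)
      calc |1 - (q ^ N) ^ 2| * |w (q ^ N)| ≤ 1 * BB q :=
        mul_le_mul hx2 hwb (abs_nonneg _) (by norm_num)
      _ = BB q := one_mul _
    · have hcont : Continuous (fun y : ℝ => (H n).eval (y / q) - (H n).eval (-y / q)) := by
        fun_prop
      have h0 : (fun y : ℝ => (H n).eval (y / q) - (H n).eval (-y / q)) 0 = 0 := by simp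
      have htq : Tendsto (fun N : ℕ => (q:ℝ) ^ N) atTop (nhds 0) :=
        tendsto_pow_atTop_nhds_zero_of_lt_one hq0.le hq1
      have h1 := (hcont.tendsto 0).comp htq
      simp only [Function.comp_def, zero_div, neg_zero, sub_self] at h1
      have h2 := ((continuous_abs.tendsto 0).comp h1).const_mul (|q - 1| * q ^ n * BB q)
      simp only [Function.comp_def, abs_zero, mul_zero] at h2
      exact h2
  have hkey := telescope hq0 hq1 F (fun x => (H (n+1)).eval x * w x) hrel
    (by simpa using hsum) hlim
  have hF1 : F 1 = 0 := by rw [hF]; simp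
  have hFm1 : F (-1) = 0 := by rw [hF]; simp
  rw [hF1, hFm1] at hkey
  unfold Lp
  simpa using hkey

end LP
section ORTH
variable {q : ℝ} {w : ℝ → ℝ} {H : ℕ → Polynomial ℝ}

noncomputable def gam (q : ℝ) : ℕ → ℝ
  | 0 => 1
  | n + 1 => q ^ n * (1 - q ^ (n + 1)) * gam q n

lemma gam_pos (hq0 : 0 < q) (hq1 : q < 1) : ∀ n, 0 < gam q n
  | 0 => one_pos
  | n + 1 => by
    have h1 : q ^ (n+1) < 1 := pow_lt_one₀ hq0.le hq1 (Nat.succ_ne_zero n)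
    have h2 := gam_pos hq0 hq1 n
    have h3 := pow_pos hq0 n
    show 0 < q ^ n * (1 - q ^ (n + 1)) * gam q n
    exact mul_pos (mul_pos h3 (by linarith)) h2

lemma Lp_H_ne (hq0 : 0 < q) (hq1 : q < 1) (hw : HW q w) (hH : HRec q H)
    {n : ℕ} (hn : n ≠ 0) : Lp q w (H n) = 0 := by
  obtain ⟨m, rfl⟩ := Nat.exists_eq_succ_of_ne_zero hn
  exact Lp_H_succ hq0 hq1 hw hH m

lemma prod_rec (hH : HRec q H) (n m : ℕ) :
    H (n + 2) * H (m + 1) = H (n + 1) * H (m + 2)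
      + C (q ^ m * (1 - q ^ (m + 1))) * (H (n + 1) * H m)
      - C (q ^ n * (1 - q ^ (n + 1))) * (H n * H (m + 1)) := by
  linear_combination (H (m + 1)) * (hH.2.2 n) - (H (n + 1)) * (hH.2.2 m)

lemma X_mul_H (hH : HRec q H) (m : ℕ) :
    H 1 * H (m + 1) = H (m + 2) + C (q ^ m * (1 - q ^ (m + 1))) * H m := by
  rw [hH.2.1]
  linear_combination -(1 : Polynomial ℝ) * hH.2.2 m

lemma Lp_orth (hq0 : 0 < q) (hq1 : q < 1) (hw : HW q w) (hH : HRec q H) :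
    ∀ n m : ℕ, Lp q w (H n * H m) = if n = m then gam q n * Lp q w 1 else 0 := by
  intro n
  induction n using Nat.twoStepInduction with
  | zero =>
    intro m
    rw [hH.1, one_mul]
    cases m with
    | zero => rw [if_pos rfl, hH.1]; simp [gam]
    | succ m =>
      rw [if_neg (by omega : ¬ (0 = m + 1))]
      exact Lp_H_ne hq0 hq1 hw hH (Nat.succ_ne_zero m)
  | one =>
    intro m
    cases m with
    | zero =>
      rw [hH.1, mul_one, if_neg (by omega : (1:ℕ) ≠ 0)]
      exact Lp_H_ne hq0 hq1 hw hH one_ne_zero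
    | succ m =>
      rw [X_mul_H hH m, Lp_add hq0 hq1 hw, Lp_Cmul]
      rw [Lp_H_ne hq0 hq1 hw hH (n := m + 2) (by omega)]
      cases m with
      | zero =>
        rw [hH.1, if_pos rfl]
        simp [gam]
      | succ m =>
        rw [Lp_H_ne hq0 hq1 hw hH (n := m + 1) (by omega), if_neg (by omega : (1:ℕ) ≠ m+1+1)]
        ring
  | more n ih1 ih2 =>
    intro m
    cases m with
    | zero =>
      rw [hH.1, mul_one, if_neg (by omega : n + 2 ≠ 0)]
      exact Lp_H_ne hq0 hq1 hw hH (by omega)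
    | succ m =>
      rw [prod_rec hH n m, Lp_sub hq0 hq1 hw, Lp_add hq0 hq1 hw, Lp_Cmul, Lp_Cmul]
      rw [ih2 (m + 2), ih2 m, ih1 (m + 1)]
      by_cases hA : n + 1 = m + 2
      · have hn : n = m + 1 := by omega
        subst hn
        rw [if_pos hA, if_neg (by omega), if_pos (by omega : m + 1 = m + 1),
          if_neg (by omega : m + 1 + 2 ≠ m + 1)]
        show gam q (m + 2) * Lp q w 1 + q ^ m * (1 - q ^ (m + 1)) * 0
          - q ^ (m + 1) * (1 - q ^ (m + 1 + 1)) * (gam q (m + 1) * Lp q w 1) = 0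
        have hg : gam q (m + 2) = q ^ (m + 1) * (1 - q ^ (m + 2)) * gam q (m + 1) := rfl
        rw [hg]
        ring_nf
      · by_cases hB : n + 1 = m
        · subst hB
          rw [if_neg hA, if_pos rfl, if_neg (by omega), if_pos (by omega : n + 2 = n + 1 + 1)]
          have hg : gam q (n + 2) = q ^ (n + 1) * (1 - q ^ (n + 2)) * gam q (n + 1) := rfl
          rw [hg]
          ring_nf
        · rw [if_neg hA, if_neg hB, if_neg (by omega), if_neg (by omega : n + 2 ≠ m + 1)]
          ring

lemma expandH (hH : HRec q H) : ∀ (d : ℕ) (p : Polynomial ℝ), p.natDegree ≤ d →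
    ∃ c : ℕ → ℝ, p = ∑ k ∈ Finset.range (d + 1), C (c k) * H k := by
  intro d
  induction d with
  | zero =>
    intro p hp
    refine ⟨fun _ => p.coeff 0, ?_⟩
    rw [eq_C_of_natDegree_le_zero hp]
    simp [hH.1]
  | succ d ih =>
    intro p hp
    set a := p.coeff (d + 1) with ha
    have hHd := H_monic_natDegree hH (d + 1)
    have hr : (p - C a * H (d + 1)).natDegree ≤ d := by
      rw [natDegree_le_iff_coeff_eq_zero]
      intro N hN
      rw [coeff_sub, coeff_C_mul]
      rcases Nat.lt_or_ge (d + 1) N with h | h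
      · rw [coeff_eq_zero_of_natDegree_lt (lt_of_le_of_lt hp h),
            coeff_eq_zero_of_natDegree_lt (by omega : (H (d+1)).natDegree < N)]
        ring
      · have hN1 : N = d + 1 := by omega
        subst hN1
        have h1 : (H (d + 1)).coeff (d + 1) = 1 := by
          have h2 := hHd.1
          rw [Polynomial.Monic, Polynomial.leadingCoeff, hHd.2] at h2
          exact h2
        rw [h1, ← ha]; ring
    obtain ⟨c, hc⟩ := ih _ hr
    refine ⟨fun k => if k = d + 1 then a else c k, ?_⟩
    beta_reduce
    rw [Finset.sum_range_succ, if_pos rfl]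
    have hsum : ∑ k ∈ Finset.range (d + 1), C (if k = d + 1 then a else c k) * H k
        = ∑ k ∈ Finset.range (d + 1), C (c k) * H k := by
      apply Finset.sum_congr rfl
      intro k hk
      rw [Finset.mem_range] at hk
      rw [if_neg (by omega)]
    rw [hsum, ← hc]
    ring

end ORTH
end QHermiteAux
open QHermiteAux in
/-- The q-derivative of the q-Hermite I-Sobolev type polynomial at the mass point:
`(D_q S_n)(α) = [n]_q H_{n-1}(α) / (1 + λ K_{n-1,q}^{(1,1)}(α,α))`. -/
theorem qHermite_sobolev_deriv_at_mass (q : ℝ) (hq0 : 0 < q) (hq1 : q < 1)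
    (lam : ℝ) (hlam : 0 < lam) (α : ℝ) (hα : α ∉ Set.Icc (-1 : ℝ) 1)
    (H : ℕ → Polynomial ℝ) (hH0 : H 0 = 1) (hH1 : H 1 = X)
    (hHrec : ∀ n : ℕ, H (n + 2) = X * H (n + 1) - C (q ^ (n + 1 - 1) * (1 - q ^ (n + 1))) * H n)
    (Dq : Polynomial ℝ → Polynomial ℝ)
    (hDq : ∀ p : Polynomial ℝ, C (q - 1) * X * Dq p = p.comp (C q * X) - p)
    (w : ℝ → ℝ)
    (hw : ∀ x : ℝ, w x = (∏' j : ℕ, (1 - x * q ^ (j + 1))) * (∏' j : ℕ, (1 + x * q ^ (j + 1))))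
    (inner : Polynomial ℝ → Polynomial ℝ → ℝ)
    (hinner : ∀ f g : Polynomial ℝ, inner f g =
      (1 - q) * ∑' k : ℕ, q ^ k *
        (f.eval (q ^ k) * g.eval (q ^ k) * w (q ^ k) +
          f.eval (-(q ^ k)) * g.eval (-(q ^ k)) * w (-(q ^ k))))
    (h : ℕ → ℝ) (hh : ∀ m : ℕ, h m = inner (H m) (H m))
    (sInner : Polynomial ℝ → Polynomial ℝ → ℝ)
    (hsInner : ∀ f g : Polynomial ℝ,
      sInner f g = inner f g + lam * (Dq f).eval α * (Dq g).eval α)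
    (S : ℕ → Polynomial ℝ)
    (hSmonic : ∀ n : ℕ, (S n).Monic ∧ (S n).natDegree = n)
    (hSorth : ∀ n : ℕ, ∀ p : Polynomial ℝ, p.natDegree < n → sInner (S n) p = 0) :
    ∀ n : ℕ,
      (Dq (S (n + 1))).eval α =
        (1 - q ^ (n + 1)) / (1 - q) * (H n).eval α /
          (1 + lam * ∑ k ∈ Finset.range (n + 1), ((Dq (H k)).eval α) ^ 2 / h k) := by
  intro n
  have hq1ne : q ≠ 1 := ne_of_lt hq1
  have hH' : HRec q H := hrec_of H hH0 hH1 hHrec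
  have hw' : HW q w := hw
  have hDq' : HDq q Dq := hDq
  have hinnerLp : ∀ f g : Polynomial ℝ, inner f g = Lp q w (f * g) := by
    intro f g
    rw [hinner]
    unfold Lp
    congr 1
    apply tsum_congr
    intro k
    simp only [eval_mul]
    try ring
  have hLp1pos := Lp_one_pos hq0 hq1 hw'
  have horth := Lp_orth hq0 hq1 hw' hH'
  have hval : ∀ m, h m = gam q m * Lp q w 1 := by
    intro m
    rw [hh, hinnerLp, horth m m, if_pos rfl]
  have hpos : ∀ m, 0 < h m := fun m =>
    (hval m) ▸ mul_pos (gam_pos hq0 hq1 m) hLp1pos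
  have hdHsucc : ∀ k, (Dq (H (k + 1))).eval α = (1 - q ^ (k + 1)) / (1 - q) * (H k).eval α := by
    intro k
    rw [DqH hq1ne hDq' hH' k]
    simp [eval_mul]
  -- expansion of S (n+1)
  have hSm := hSmonic (n + 1)
  have hHm := H_monic_natDegree hH' (n + 1)
  have hdeg : (S (n + 1) - H (n + 1)).natDegree ≤ n := by
    rw [natDegree_le_iff_coeff_eq_zero]
    intro N hN
    rw [coeff_sub]
    rcases Nat.lt_or_ge (n + 1) N with hlt | hge
    · have hs : (S (n + 1)).natDegree < N := by rw [hSm.2]; omega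
      have hhd : (H (n + 1)).natDegree < N := by rw [hHm.2]; omega
      rw [coeff_eq_zero_of_natDegree_lt hs, coeff_eq_zero_of_natDegree_lt hhd]
      ring
    · have hN1 : N = n + 1 := by omega
      subst hN1
      have c1 : (S (n + 1)).coeff (n + 1) = 1 := by
        have h2 := hSm.1
        rw [Polynomial.Monic, Polynomial.leadingCoeff, hSm.2] at h2
        exact h2
      have c2 : (H (n + 1)).coeff (n + 1) = 1 := by
        have h2 := hHm.1
        rw [Polynomial.Monic, Polynomial.leadingCoeff, hHm.2] at h2
        exact h2
      rw [c1, c2]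
      ring
  obtain ⟨c, hc⟩ := expandH hH' n (S (n + 1) - H (n + 1)) hdeg
  have hS : S (n + 1) = H (n + 1) + ∑ k ∈ Finset.range (n + 1), C (c k) * H k := by
    linear_combination hc
  -- the c_k equations
  have hck : ∀ k, k ∈ Finset.range (n + 1) →
      c k * h k = -(lam * (Dq (S (n + 1))).eval α * (Dq (H k)).eval α) := by
    intro k hk
    have hkn : k < n + 1 := Finset.mem_range.mp hk
    have hdegk : (H k).natDegree < n + 1 := by
      rw [(H_monic_natDegree hH' k).2]; omega
    have h0 := hSorth (n + 1) (H k) hdegk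
    rw [hsInner] at h0
    have hinn : inner (S (n + 1)) (H k) = c k * h k := by
      rw [hinnerLp, hS, add_mul, Finset.sum_mul, Lp_add hq0 hq1 hw', Lp_sum hq0 hq1 hw']
      have hterm : ∀ j ∈ Finset.range (n + 1),
          Lp q w (C (c j) * H j * H k) = if j = k then c k * h k else 0 := by
        intro j _
        rw [mul_assoc, Lp_Cmul, horth j k]
        by_cases hjk : j = k
        · subst hjk
          rw [if_pos rfl, if_pos rfl, hval j]
        · rw [if_neg hjk, if_neg hjk, mul_zero]
      rw [Finset.sum_congr rfl hterm, Finset.sum_ite_eq' (Finset.range (n + 1)) k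
        (fun _ => c k * h k), if_pos hk, horth (n + 1) k, if_neg (by omega : n + 1 ≠ k)]
      ring
    rw [hinn] at h0
    linarith
  -- the a equation
  have hDqS : Dq (S (n + 1)) = Dq (H (n + 1)) + ∑ k ∈ Finset.range (n + 1), C (c k) * Dq (H k) := by
    rw [hS, Dq_add hq1ne hDq', Dq_sum hq1ne hDq']
    congr 1
    exact Finset.sum_congr rfl (fun k _ => Dq_Cmul hq1ne hDq' _ _)
  have haeq : (Dq (S (n + 1))).eval α
      = (Dq (H (n + 1))).eval α + ∑ k ∈ Finset.range (n + 1), c k * (Dq (H k)).eval α := by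
    rw [hDqS]
    rw [eval_add, eval_finset_sum]
    congr 1
    exact Finset.sum_congr rfl (fun k _ => by rw [eval_mul, eval_C])
  have hsum2 : ∑ k ∈ Finset.range (n + 1), c k * (Dq (H k)).eval α
      = -(lam * (Dq (S (n + 1))).eval α
          * ∑ k ∈ Finset.range (n + 1), ((Dq (H k)).eval α) ^ 2 / h k) := by
    rw [Finset.mul_sum, ← Finset.sum_neg_distrib]
    apply Finset.sum_congr rfl
    intro k hk
    have hcv : c k = -(lam * (Dq (S (n + 1))).eval α * (Dq (H k)).eval α) / h k := by
      rw [eq_div_iff (hpos k).ne']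
      exact hck k hk
    rw [hcv]
    field_simp
  have hKnn : 0 ≤ ∑ k ∈ Finset.range (n + 1), ((Dq (H k)).eval α) ^ 2 / h k := by
    apply Finset.sum_nonneg
    intro k _
    have := hpos k
    positivity
  have hden : 0 < 1 + lam * ∑ k ∈ Finset.range (n + 1), ((Dq (H k)).eval α) ^ 2 / h k := by
    nlinarith
  rw [eq_div_iff hden.ne']
  rw [← hdHsucc n]
  linear_combination haeq + hsum2
end
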